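/- arXiv:1905.12148 — 6 statements merged into one kernel-verified Lean document; each statement's English description precedes it below -/
import Mathlib

section
/- Let m ≥ 1 and let ε be a Q-digit sequence with ε_m ≥ 1 and ε_n = 0 for all n > m. Define the Q-digit sequence δ by δ_n = ε_n for n < m, δ_m = ε_m − 1, and δ_n = q_n − 1 for n > m. Then Φ_Q(δ) = Φ_Q(ε) (the two sequences represent the same number), and f̂(δ) − f̂(ε) = −1/q^m + Σ_{n=m+1}^∞ (q_n − 1)/q^n ≤ 0; moreover this difference equals 0 if and only if q_n = q for all n > m. -/
open Filter Topology

private lemma sumgeo (r C : ℝ) (h0 : 0 ≤ r) (h1 : r < 1) (f : ℕ → ℝ)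
    (hf0 : ∀ n, 0 ≤ f n) (hle : ∀ n, f n ≤ C * r ^ n) : Summable f :=
  Summable.of_nonneg_of_le hf0 hle ((summable_geometric_of_lt_one h0 h1).mul_left C)

private lemma tele (F : ℕ → ℝ) (hnn : ∀ k, 0 ≤ F k - F (k+1)) (hF : Tendsto F atTop (𝓝 0)) :
    HasSum (fun k => F k - F (k+1)) (F 0) := by
  rw [hasSum_iff_tendsto_nat_of_nonneg hnn]
  have h : ∀ N, ∑ k ∈ Finset.range N, (F k - F (k+1)) = F 0 - F N :=
    fun N => Finset.sum_range_sub' F N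
  simp only [h]
  simpa using (tendsto_const_nhds (x := F 0)).sub hF

/-- 0-indexed: index `n : ℕ` corresponds to the paper's index `n+1`.
Fix `q ≥ 2` and a sequence `a` of integers with `2 ≤ a n ≤ q`.  A Q-digit sequence `ε`
satisfies `ε n < a n`.  `Φ_Q(ε) = ∑ ε n / (a 0 ⋯ a n)` and `f̂(ε) = ∑ ε n / q^(n+1)`. -/
theorem stmt0 (q : ℕ) (hq : 2 ≤ q) (a : ℕ → ℕ) (ha : ∀ n, 2 ≤ a n ∧ a n ≤ q)
    (ε : ℕ → ℕ) (hε : ∀ n, ε n < a n)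
    (m : ℕ) (hεm : 1 ≤ ε m) (hεtail : ∀ n, m < n → ε n = 0)
    (δ : ℕ → ℕ)
    (hδlt : ∀ n, n < m → δ n = ε n) (hδm : δ m = ε m - 1)
    (hδgt : ∀ n, m < n → δ n = a n - 1) :
    (∑' n : ℕ, (δ n : ℝ) / ∏ j ∈ Finset.range (n + 1), (a j : ℝ))
      = (∑' n : ℕ, (ε n : ℝ) / ∏ j ∈ Finset.range (n + 1), (a j : ℝ)) ∧
    (∑' n : ℕ, (δ n : ℝ) / (q : ℝ) ^ (n + 1)) - (∑' n : ℕ, (ε n : ℝ) / (q : ℝ) ^ (n + 1))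
      = -(1 / (q : ℝ) ^ (m + 1)) + ∑' n : ℕ, ((a (m + 1 + n) : ℝ) - 1) / (q : ℝ) ^ (m + 2 + n) ∧
    (∑' n : ℕ, (δ n : ℝ) / (q : ℝ) ^ (n + 1)) - (∑' n : ℕ, (ε n : ℝ) / (q : ℝ) ^ (n + 1)) ≤ 0 ∧
    ((∑' n : ℕ, (δ n : ℝ) / (q : ℝ) ^ (n + 1)) - (∑' n : ℕ, (ε n : ℝ) / (q : ℝ) ^ (n + 1)) = 0
      ↔ ∀ n, m < n → a n = q) := by
  have hq1 : (1:ℝ) < q := by exact_mod_cast lt_of_lt_of_le one_lt_two (by exact_mod_cast hq)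
  have hq0 : (0:ℝ) < q := lt_trans one_pos hq1
  have hqinv : (1/(q:ℝ)) < 1 := by rw [div_lt_one hq0]; exact hq1
  have hqinv0 : (0:ℝ) ≤ 1/(q:ℝ) := by positivity
  have haR : ∀ n, (2:ℝ) ≤ (a n : ℝ) := fun n => by exact_mod_cast (ha n).1
  have haq : ∀ n, (a n : ℝ) ≤ q := fun n => by exact_mod_cast (ha n).2
  set P : ℕ → ℝ := fun n => ∏ j ∈ Finset.range (n+1), (a j : ℝ) with hPdef
  have hP2 : ∀ n, (2:ℝ)^(n+1) ≤ P n := by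
    intro n
    calc (2:ℝ)^(n+1) = ∏ _j ∈ Finset.range (n+1), (2:ℝ) := by
          rw [Finset.prod_const, Finset.card_range]
    _ ≤ P n := Finset.prod_le_prod (fun j _ => by norm_num) (fun j _ => haR j)
  have hPpos : ∀ n, 0 < P n := fun n => lt_of_lt_of_le (by positivity) (hP2 n)
  have hPrec : ∀ n, P (n+1) = P n * a (n+1) := fun n => Finset.prod_range_succ _ _
  -- digit bounds
  have hδa : ∀ n, δ n < a n := by
    intro n
    rcases lt_trichotomy n m with h | h | h
    · rw [hδlt n h]; exact hε n
    · rw [h, hδm]; have := hε m; omega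
    · rw [hδgt n h]; have := (ha n).1; omega
  have hδq : ∀ n, (δ n : ℝ) ≤ q := fun n => by
    exact_mod_cast le_trans (le_of_lt (hδa n)) (ha n).2
  have hεq : ∀ n, (ε n : ℝ) ≤ q := fun n => by
    exact_mod_cast le_trans (le_of_lt (hε n)) (ha n).2
  -- summability with weight P
  have hsumP : ∀ (c : ℕ → ℕ), (∀ n, (c n : ℝ) ≤ q) → Summable (fun n => (c n:ℝ) / P n) := by
    intro c hc
    refine sumgeo (1/2) q (by norm_num) (by norm_num) _ (fun n => by positivity) (fun n => ?_)
    have h2 : (2:ℝ)^n ≤ P n := le_trans (pow_le_pow_right₀ (by norm_num) (by omega)) (hP2 n)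
    calc (c n : ℝ) / P n ≤ (q:ℝ) / 2^n :=
          div_le_div₀ (by positivity) (hc n) (by positivity) h2
    _ = q * (1/2)^n := by rw [div_pow, one_pow, mul_one_div]
  -- summability with weight q^(n+1)
  have hsumQ : ∀ (c : ℕ → ℕ), (∀ n, (c n : ℝ) ≤ q) → Summable (fun n => (c n:ℝ) / (q:ℝ)^(n+1)) := by
    intro c hc
    refine sumgeo (1/q) q hqinv0 hqinv _ (fun n => by positivity) (fun n => ?_)
    have h2 : (q:ℝ)^n ≤ (q:ℝ)^(n+1) := pow_le_pow_right₀ (le_of_lt hq1) (by omega)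
    calc (c n : ℝ) / (q:ℝ)^(n+1) ≤ (q:ℝ) / (q:ℝ)^n :=
          div_le_div₀ (by positivity) (hc n) (by positivity) h2
    _ = q * (1/q)^n := by rw [div_pow, one_pow, mul_one_div]
  -- tail series summability
  have htailQ : Summable (fun i => ((a (m+1+i):ℝ) - 1) / (q:ℝ)^(m+2+i)) := by
    refine sumgeo (1/q) q hqinv0 hqinv _ (fun i => div_nonneg (by have := haR (m+1+i); linarith) (by positivity)) (fun i => ?_)
    have h2 : (q:ℝ)^i ≤ (q:ℝ)^(m+2+i) := pow_le_pow_right₀ (le_of_lt hq1) (by omega)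
    have h3 : (a (m+1+i):ℝ) - 1 ≤ q := by have := haq (m+1+i); linarith
    calc ((a (m+1+i):ℝ) - 1) / (q:ℝ)^(m+2+i) ≤ (q:ℝ) / (q:ℝ)^i :=
          div_le_div₀ (le_of_lt hq0) h3 (by positivity) h2
    _ = q * (1/q)^i := by rw [div_pow, one_pow, mul_one_div]
  have hsumB : Summable (fun i => ((q:ℝ) - 1) / (q:ℝ)^(m+2+i)) := by
    refine sumgeo (1/q) q hqinv0 hqinv _
      (fun i => div_nonneg (by linarith) (by positivity)) (fun i => ?_)
    have h2 : (q:ℝ)^i ≤ (q:ℝ)^(m+2+i) := pow_le_pow_right₀ (le_of_lt hq1) (by omega)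
    calc ((q:ℝ) - 1) / (q:ℝ)^(m+2+i) ≤ (q:ℝ) / (q:ℝ)^i :=
          div_le_div₀ (le_of_lt hq0) (by linarith) (by positivity) h2
    _ = q * (1/q)^i := by rw [div_pow, one_pow, mul_one_div]
  -- cast facts
  have hcastm : ((ε m - 1 : ℕ) : ℝ) = (ε m : ℝ) - 1 := by
    rw [Nat.cast_sub hεm, Nat.cast_one]
  have hcasta : ∀ n, ((a n - 1 : ℕ) : ℝ) = (a n : ℝ) - 1 := fun n => by
    rw [Nat.cast_sub (le_trans (by norm_num) (ha n).1), Nat.cast_one]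
  -- the key decomposition lemma
  have key : ∀ (W : ℕ → ℝ), (∀ n, 0 < W n) →
      Summable (fun n => (δ n:ℝ)/W n) → Summable (fun n => (ε n:ℝ)/W n) →
      (∑' n, (δ n:ℝ)/W n) - (∑' n, (ε n:ℝ)/W n)
        = -(1/W m) + ∑' i, ((a (m+1+i):ℝ) - 1)/W (m+1+i) := by
    intro W hW hsd hse
    have hD : Summable (fun n => ((δ n:ℝ) - ε n)/W n) := by
      have := hsd.sub hse
      refine this.congr (fun n => ?_)
      simp [sub_div]
    have h1 : (∑' n, (δ n:ℝ)/W n) - (∑' n, (ε n:ℝ)/W n) = ∑' n, ((δ n:ℝ) - ε n)/W n := by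
      rw [← Summable.tsum_sub hsd hse]
      exact tsum_congr (fun n => (sub_div _ _ _).symm)
    rw [h1, ← hD.sum_add_tsum_nat_add (m+1)]
    congr 1
    · rw [Finset.sum_range_succ,
        Finset.sum_eq_zero (fun n hn => by
          rw [hδlt n (Finset.mem_range.1 hn)]; simp), zero_add, hδm, hcastm]
      ring
    · refine tsum_congr (fun i => ?_)
      have e : i + (m+1) = m+1+i := by omega
      rw [e, hδgt (m+1+i) (by omega), hεtail (m+1+i) (by omega), hcasta (m+1+i)]
      norm_num
  -- telescoping for the P-weighted tail
  have hteleval : ∑' i, ((a (m+1+i):ℝ) - 1)/P (m+1+i) = 1 / P m := by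
    have hfun : (fun i => ((a (m+1+i):ℝ) - 1)/P (m+1+i))
        = fun k => (1/P (m+k)) - (1/P (m+(k+1))) := by
      funext k
      have e : m+1+k = (m+k)+1 := by omega
      have ha0 : (a ((m+k)+1) : ℝ) ≠ 0 := by have := haR ((m+k)+1); linarith
      rw [e, show m+(k+1) = (m+k)+1 from by omega, hPrec (m+k)]
      field_simp [ne_of_gt (hPpos (m+k))]
    have hnn : ∀ k, 0 ≤ (1/P (m+k)) - (1/P (m+(k+1))) := by
      intro k
      have h1 : P (m+k) ≤ P (m+(k+1)) := by
        rw [show m+(k+1) = (m+k)+1 from rfl, hPrec (m+k)]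
        have := haR ((m+k)+1)
        nlinarith [hPpos (m+k)]
      exact sub_nonneg.2 (one_div_le_one_div_of_le (hPpos (m+k)) h1)
    have hF : Tendsto (fun k => 1/P (m+k)) atTop (𝓝 0) := by
      refine squeeze_zero (fun k => by positivity) (fun k => ?_)
        (tendsto_pow_atTop_nhds_zero_of_lt_one (by norm_num) (by norm_num : (1:ℝ)/2 < 1))
      have h2 : (2:ℝ)^k ≤ P (m+k) :=
        le_trans (pow_le_pow_right₀ (by norm_num) (by omega)) (hP2 (m+k))
      rw [div_pow, one_pow]
      exact div_le_div₀ (by norm_num) le_rfl (by positivity) h2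
    have := (tele (fun k => 1/P (m+k)) hnn hF)
    rw [hfun]
    simpa using this.tsum_eq
  -- value of the geometric bound series
  have hBval : ∑' i, ((q:ℝ) - 1) / (q:ℝ)^(m+2+i) = 1 / (q:ℝ)^(m+1) := by
    have hterm : ∀ i, ((q:ℝ) - 1) / (q:ℝ)^(m+2+i) = (((q:ℝ)-1)/(q:ℝ)^(m+2)) * (1/q)^i := by
      intro i
      rw [pow_add, div_pow, one_pow]
      field_simp
    rw [tsum_congr hterm, tsum_mul_left, tsum_geometric_of_lt_one hqinv0 hqinv]
    have hq0' : (q:ℝ) ≠ 0 := ne_of_gt hq0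
    have hq1' : (q:ℝ) - 1 ≠ 0 := by linarith
    have h1q : (1:ℝ) - 1/q = ((q:ℝ)-1)/q := by field_simp
    rw [h1q]
    rw [pow_succ, pow_succ]
    field_simp
  -- statement 2
  have S2 : (∑' n : ℕ, (δ n : ℝ) / (q : ℝ) ^ (n + 1)) - (∑' n : ℕ, (ε n : ℝ) / (q : ℝ) ^ (n + 1))
      = -(1 / (q : ℝ) ^ (m + 1)) + ∑' n : ℕ, ((a (m + 1 + n) : ℝ) - 1) / (q : ℝ) ^ (m + 2 + n) := by
    have hk := key (fun n => (q:ℝ)^(n+1)) (fun n => by positivity) (hsumQ δ hδq) (hsumQ ε hεq)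
    beta_reduce at hk
    rw [hk]
    congr 1
    exact tsum_congr (fun i => by rw [show m+1+i+1 = m+2+i from by omega])
  -- statement 1
  have S1 : (∑' n, (δ n : ℝ) / P n) = ∑' n, (ε n : ℝ) / P n := by
    have hk := key P hPpos (hsumP δ hδq) (hsumP ε hεq)
    rw [hteleval] at hk
    have : (∑' n, (δ n : ℝ) / P n) - (∑' n, (ε n : ℝ) / P n) = 0 := by rw [hk]; ring
    linarith [this]
  -- termwise comparison for the tail
  have htermle : ∀ i, ((a (m+1+i):ℝ) - 1) / (q:ℝ)^(m+2+i) ≤ ((q:ℝ) - 1) / (q:ℝ)^(m+2+i) := by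
    intro i
    have h1 := haq (m+1+i)
    gcongr
  have htail_le : ∑' n : ℕ, ((a (m + 1 + n) : ℝ) - 1) / (q : ℝ) ^ (m + 2 + n) ≤ 1/(q:ℝ)^(m+1) := by
    rw [← hBval]
    exact Summable.tsum_le_tsum htermle htailQ hsumB
  have S3 : (∑' n : ℕ, (δ n : ℝ) / (q : ℝ) ^ (n + 1)) - (∑' n : ℕ, (ε n : ℝ) / (q : ℝ) ^ (n + 1)) ≤ 0 := by
    rw [S2]; linarith
  have S4 : ((∑' n : ℕ, (δ n : ℝ) / (q : ℝ) ^ (n + 1)) - (∑' n : ℕ, (ε n : ℝ) / (q : ℝ) ^ (n + 1)) = 0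
      ↔ ∀ n, m < n → a n = q) := by
    constructor
    · intro h0 n hn
      rw [S2] at h0
      have hS : (∑' i : ℕ, ((a (m + 1 + i) : ℝ) - 1) / (q : ℝ) ^ (m + 2 + i))
          = ∑' i : ℕ, ((q:ℝ) - 1) / (q:ℝ)^(m+2+i) := by rw [hBval]; linarith
      have hz : ∑' i : ℕ, (((q:ℝ) - 1) / (q:ℝ)^(m+2+i)
          - ((a (m + 1 + i) : ℝ) - 1) / (q : ℝ) ^ (m + 2 + i)) = 0 := by
        rw [Summable.tsum_sub hsumB htailQ, hS, sub_self]
      set i := n - (m+1) with hidef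
      have hni : m+1+i = n := by omega
      have hle2 : ((q:ℝ) - 1) / (q:ℝ)^(m+2+i)
          - ((a (m + 1 + i) : ℝ) - 1) / (q : ℝ) ^ (m + 2 + i) ≤ 0 := by
        rw [← hz]
        exact Summable.le_tsum (hsumB.sub htailQ) i (fun j _ => sub_nonneg.2 (htermle j))
      have hge2 := sub_nonneg.2 (htermle i)
      have heq : ((q:ℝ) - 1) / (q:ℝ)^(m+2+i) = ((a (m + 1 + i) : ℝ) - 1) / (q : ℝ) ^ (m + 2 + i) := by
        linarith
      have hd : ((q:ℝ)^(m+2+i)) ≠ 0 := by positivity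
      have h3 : (q:ℝ) - 1 = (a (m+1+i):ℝ) - 1 := by
        have := congrArg (· * (q:ℝ)^(m+2+i)) heq
        simpa [div_mul_cancel₀, hd] using this
      have h4 : (a n : ℝ) = q := by rw [← hni]; linarith
      exact_mod_cast h4
    · intro hA
      rw [S2]
      have hcongr : ∑' n : ℕ, ((a (m + 1 + n) : ℝ) - 1) / (q : ℝ) ^ (m + 2 + n)
          = ∑' n : ℕ, ((q:ℝ) - 1) / (q:ℝ)^(m+2+n) :=
        tsum_congr (fun i => by rw [hA (m+1+i) (by omega)])
      rw [hcongr, hBval]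
      ring
  simp only [hPdef] at S1
  exact ⟨S1, S2, S3, S4⟩
end

section
/- The function f is continuous at every point of [0,1] that is not Q-rational. -/
open Filter Topology MeasureTheory

/-- Product `q_1 ⋯ q_n` of the first `n` bases (0-indexed sequence `a`). -/
noncomputable def cantorProd (a : ℕ → ℕ) (n : ℕ) : ℕ := ∏ j ∈ Finset.range n, a j

/-- The canonical Q-digit of `x` at (0-indexed) position `n`:
`ε_{n+1}(x) = ⌊q_1⋯q_{n+1} x⌋ - q_{n+1} ⌊q_1⋯q_n x⌋`. -/
noncomputable def cantorDigit (a : ℕ → ℕ) (x : ℝ) (n : ℕ) : ℤ :=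
  ⌊(cantorProd a (n + 1) : ℝ) * x⌋ - (a n : ℤ) * ⌊(cantorProd a n : ℝ) * x⌋

/-- The function `f`: for `x < 1`, `f(x) = ∑ ε_n(x)/q^n`; `f(1) = ∑ (q_n - 1)/q^n`. -/
noncomputable def cantorF (a : ℕ → ℕ) (q : ℕ) (x : ℝ) : ℝ :=
  if x < 1 then ∑' n : ℕ, (cantorDigit a x n : ℝ) / (q : ℝ) ^ (n + 1)
  else ∑' n : ℕ, ((a n : ℝ) - 1) / (q : ℝ) ^ (n + 1)

/-- `x ∈ (0,1)` is Q-rational if it is a finite sum `∑_{i=1}^m c_i/(q_1⋯q_i)`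
with digits `0 ≤ c_i ≤ q_i - 1`. -/
def QRational (a : ℕ → ℕ) (x : ℝ) : Prop :=
  x ∈ Set.Ioo (0 : ℝ) 1 ∧
    ∃ m : ℕ, 1 ≤ m ∧ ∃ c : ℕ → ℕ, (∀ i, c i < a i) ∧
      x = ∑ i ∈ Finset.range m, (c i : ℝ) / ∏ j ∈ Finset.range (i + 1), (a j : ℝ)

/-! ### Auxiliary lemmas -/

lemma cantorProd_succ (a : ℕ → ℕ) (n : ℕ) :
    cantorProd a (n+1) = cantorProd a n * a n := Finset.prod_range_succ _ _

lemma cantorProd_pos {a : ℕ → ℕ} (ha1 : ∀ n, 1 ≤ a n) (n : ℕ) : 0 < cantorProd a n :=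
  Finset.prod_pos fun i _ => ha1 i

lemma cantorProd_zero (a : ℕ → ℕ) : cantorProd a 0 = 1 := rfl

lemma cantorProd_mono {a : ℕ → ℕ} (ha1 : ∀ n, 1 ≤ a n) {m n : ℕ} (h : m ≤ n) :
    cantorProd a m ≤ cantorProd a n :=
  Finset.prod_le_prod_of_subset_of_one_le' (Finset.range_subset_range.mpr h)
    (fun i _ _ => ha1 i)

lemma cantorProd_cast_mul (a : ℕ → ℕ) (n : ℕ) (x : ℝ) :
    ((cantorProd a (n+1) : ℕ) : ℝ) * x = (a n : ℝ) * ((cantorProd a n : ℝ) * x) := by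
  rw [cantorProd_succ]; push_cast; ring

lemma cantorDigit_nonneg {a : ℕ → ℕ} (x : ℝ) (n : ℕ) : 0 ≤ cantorDigit a x n := by
  unfold cantorDigit
  rw [cantorProd_cast_mul, sub_nonneg]
  apply Int.le_floor.mpr
  push_cast
  exact mul_le_mul_of_nonneg_left (Int.floor_le _) (by positivity)

lemma cantorDigit_le {a : ℕ → ℕ} (ha1 : ∀ n, 1 ≤ a n) (x : ℝ) (n : ℕ) :
    cantorDigit a x n ≤ (a n : ℤ) - 1 := by
  unfold cantorDigit
  rw [cantorProd_cast_mul]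
  have h : ⌊(a n : ℝ) * ((cantorProd a n : ℝ) * x)⌋ < (a n : ℤ) * ⌊(cantorProd a n : ℝ) * x⌋ + a n := by
    apply Int.floor_lt.mpr
    push_cast
    have h1 : ((cantorProd a n : ℝ) * x) < ⌊(cantorProd a n : ℝ) * x⌋ + 1 := Int.lt_floor_add_one _
    have h2 : (0:ℝ) < a n := by exact_mod_cast ha1 n
    nlinarith
  omega

lemma summable_aux {q : ℝ} (hq1 : 1 < q) (C : ℝ) (d : ℕ → ℤ)
    (h : ∀ n, |(d n : ℝ)| ≤ C) : Summable (fun n => (d n : ℝ) / q ^ (n+1)) := by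
  have hr0 : (0:ℝ) ≤ q⁻¹ := by positivity
  have hr1 : q⁻¹ < 1 := inv_lt_one_of_one_lt₀ hq1
  have hmaj : Summable (fun n : ℕ => (C * q⁻¹) * q⁻¹ ^ n) :=
    (summable_geometric_of_lt_one hr0 hr1).mul_left _
  apply Summable.of_norm
  apply Summable.of_nonneg_of_le (fun n => norm_nonneg _) (fun n => ?_) hmaj
  have hq0 : (0:ℝ) < q := lt_trans one_pos hq1
  have h2 : ‖(d n : ℝ) / q ^ (n+1)‖ = |(d n : ℝ)| * q⁻¹ ^ (n+1) := by
    rw [Real.norm_eq_abs, abs_div, abs_of_pos (by positivity : (0:ℝ) < q ^ (n+1)),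
      div_eq_mul_inv, ← inv_pow]
  rw [h2, pow_succ']
  calc |(d n:ℝ)| * (q⁻¹ * q⁻¹ ^ n) ≤ C * (q⁻¹ * q⁻¹ ^ n) := by
        apply mul_le_mul_of_nonneg_right (h n) (by positivity)
    _ = (C * q⁻¹) * q⁻¹ ^ n := by ring

lemma tsum_digit_diff_le {q : ℝ} (hq1 : 1 < q) (d e : ℕ → ℤ)
    (hd : ∀ n, |(d n : ℝ)| ≤ q - 1) (he : ∀ n, |(e n : ℝ)| ≤ q - 1)
    (N : ℕ) (hde : ∀ n < N, d n = e n) :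
    |(∑' n, (d n : ℝ)/ q ^(n+1)) - ∑' n, (e n : ℝ)/ q^(n+1)| ≤ 2 * q⁻¹ ^ N := by
  have hq0 : (0:ℝ) < q := lt_trans one_pos hq1
  have hr0 : (0:ℝ) ≤ q⁻¹ := by positivity
  have hr1 : q⁻¹ < 1 := inv_lt_one_of_one_lt₀ hq1
  have hsd := summable_aux hq1 (q-1) d hd
  have hse := summable_aux hq1 (q-1) e he
  set g : ℕ → ℝ := fun n => ((d n - e n : ℤ) : ℝ) / q ^ (n+1) with hgdef
  have habs : ∀ n, |g n| ≤ (2*(q-1)) * q⁻¹ ^ (n+1) := by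
    intro n
    rw [hgdef]
    simp only []
    rw [abs_div, abs_of_pos (by positivity : (0:ℝ) < q ^ (n+1)), div_eq_mul_inv, ← inv_pow]
    apply mul_le_mul_of_nonneg_right _ (by positivity)
    push_cast
    calc |(d n : ℝ) - e n| ≤ |(d n:ℝ)| + |(e n:ℝ)| := abs_sub _ _
      _ ≤ 2*(q-1) := by linarith [hd n, he n]
  have hg : Summable g := by
    apply summable_aux hq1 (2*(q-1)) (fun n => d n - e n)
    intro n
    push_cast
    calc |(d n : ℝ) - e n| ≤ |(d n:ℝ)| + |(e n:ℝ)| := abs_sub _ _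
      _ ≤ 2*(q-1) := by linarith [hd n, he n]
  have heq : (∑' n, (d n : ℝ)/ q ^(n+1)) - ∑' n, (e n : ℝ)/ q^(n+1) = ∑' n, g n := by
    rw [← Summable.tsum_sub hsd hse]
    congr 1; ext n; rw [hgdef]; push_cast; ring
  rw [heq, ← Summable.sum_add_tsum_nat_add N hg]
  have hzero : ∑ i ∈ Finset.range N, g i = 0 := by
    apply Finset.sum_eq_zero
    intro i hi
    rw [hgdef]
    simp only []
    rw [hde i (Finset.mem_range.mp hi)]
    simp
  rw [hzero, zero_add]
  have hgN : Summable (fun i => g (i+N)) := (summable_nat_add_iff N).mpr hg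
  calc |∑' i, g (i+N)|
      ≤ ∑' i, |g (i+N)| := by
        simpa [Real.norm_eq_abs] using
          norm_tsum_le_tsum_norm (f := fun i => g (i+N)) (by simpa [Real.norm_eq_abs] using hgN.abs)
    _ ≤ ∑' i : ℕ, (2*(q-1) * q⁻¹ ^ (N+1)) * q⁻¹ ^ i := by
        apply Summable.tsum_le_tsum _ hgN.abs ((summable_geometric_of_lt_one hr0 hr1).mul_left _)
        intro i
        calc |g (i+N)| ≤ (2*(q-1)) * q⁻¹ ^ (i+N+1) := habs (i+N)
          _ = (2*(q-1) * q⁻¹ ^ (N+1)) * q⁻¹ ^ i := by rw [show i+N+1 = (N+1)+i by ring, pow_add]; ring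
    _ = (2*(q-1) * q⁻¹ ^ (N+1)) * (1 - q⁻¹)⁻¹ := by
        rw [tsum_mul_left, tsum_geometric_of_lt_one hr0 hr1]
    _ ≤ 2 * q⁻¹ ^ N := by
        have h1 : (1 - q⁻¹) = (q-1)/q := by field_simp
        have hq1' : q - 1 ≠ 0 := ne_of_gt (by linarith)
        apply le_of_eq
        rw [h1, pow_succ, inv_div]
        field_simp

lemma floor_local {c x : ℝ} (hc : 0 < c) (h : ∀ k : ℤ, (k:ℝ) ≠ c * x) :
    ∃ δ > 0, ∀ y : ℝ, |y - x| < δ → ⌊c * y⌋ = ⌊c * x⌋ := by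
  set r := c * x with hr
  have h1 : (⌊r⌋ : ℝ) < r := lt_of_le_of_ne (Int.floor_le r) (h ⌊r⌋)
  have h2 : r < ⌊r⌋ + 1 := Int.lt_floor_add_one r
  set m := min (r - ⌊r⌋) ((⌊r⌋:ℝ) + 1 - r) with hm
  have hm0 : 0 < m := lt_min (by linarith) (by linarith)
  refine ⟨m / c, by positivity, fun y hy => ?_⟩
  have hcy : |c * y - r| < m := by
    have h3 : c * y - r = c * (y - x) := by rw [hr]; ring
    rw [h3, abs_mul, abs_of_pos hc, mul_comm]
    exact (lt_div_iff₀ hc).mp hy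
  rw [abs_lt] at hcy
  have hml : m ≤ r - ⌊r⌋ := min_le_left _ _
  have hmr : m ≤ (⌊r⌋:ℝ) + 1 - r := min_le_right _ _
  rw [Int.floor_eq_iff]
  constructor <;> push_cast <;> linarith

lemma floors_stable {a : ℕ → ℕ} (ha1 : ∀ n, 1 ≤ a n) (x : ℝ)
    (h : ∀ n, ∀ k : ℤ, (k:ℝ) ≠ (cantorProd a n : ℝ) * x) (N : ℕ) :
    ∃ δ > 0, ∀ y : ℝ, |y - x| < δ →
      ∀ n < N, ⌊(cantorProd a n : ℝ) * y⌋ = ⌊(cantorProd a n : ℝ) * x⌋ := by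
  induction N with
  | zero => exact ⟨1, one_pos, fun y _ n hn => absurd hn (Nat.not_lt_zero n)⟩
  | succ N ih =>
    obtain ⟨δ1, hδ1, H1⟩ := ih
    have hc : (0:ℝ) < (cantorProd a N : ℝ) := by exact_mod_cast cantorProd_pos ha1 N
    obtain ⟨δ2, hδ2, H2⟩ := floor_local hc (h N)
    refine ⟨min δ1 δ2, lt_min hδ1 hδ2, fun y hy n hn => ?_⟩
    rcases Nat.lt_succ_iff_lt_or_eq.mp hn with h' | h'
    · exact H1 y (hy.trans_le (min_le_left _ _)) n h'
    · subst h'; exact H2 y (hy.trans_le (min_le_right _ _))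

lemma telescope {a : ℕ → ℕ} (ha1 : ∀ n, 1 ≤ a n) (x : ℝ) (m : ℕ) :
    ∑ i ∈ Finset.range m, (cantorDigit a x i : ℝ) / (cantorProd a (i+1) : ℝ)
      = (⌊(cantorProd a m : ℝ) * x⌋ : ℝ) / (cantorProd a m : ℝ) - (⌊x⌋ : ℝ) := by
  have key : ∀ i, (cantorDigit a x i : ℝ) / (cantorProd a (i+1) : ℝ)
      = (⌊(cantorProd a (i+1) : ℝ) * x⌋ : ℝ) / (cantorProd a (i+1) : ℝ)
        - (⌊(cantorProd a i : ℝ) * x⌋ : ℝ) / (cantorProd a i : ℝ) := by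
    intro i
    have hPi : ((cantorProd a i : ℕ) : ℝ) ≠ 0 := by
      exact_mod_cast (cantorProd_pos ha1 i).ne'
    have hai : ((a i : ℕ) : ℝ) ≠ 0 := by
      have := ha1 i; positivity
    have hPsi : ((cantorProd a (i+1) : ℕ) : ℝ) = (cantorProd a i : ℝ) * (a i : ℝ) := by
      rw [cantorProd_succ]; push_cast; ring
    unfold cantorDigit
    push_cast
    rw [hPsi]
    field_simp
  rw [Finset.sum_congr rfl (fun i _ => key i), Finset.sum_range_sub
    (f := fun i => (⌊(cantorProd a i : ℝ) * x⌋ : ℝ) / (cantorProd a i : ℝ))]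
  rw [cantorProd_zero]
  norm_num

lemma cantor_not_int {q : ℕ} {a : ℕ → ℕ} (ha : ∀ n, 2 ≤ a n ∧ a n ≤ q) {x : ℝ}
    (hx0 : 0 < x) (hx1 : x < 1) (hxirr : ¬ QRational a x)
    (n : ℕ) (k : ℤ) (hk : (k : ℝ) = (cantorProd a n : ℝ) * x) : False := by
  have ha1 : ∀ m, 1 ≤ a m := fun m => le_trans one_le_two (ha m).1
  rcases Nat.eq_zero_or_pos n with hn0 | hn0
  · subst hn0
    rw [cantorProd_zero] at hk
    norm_num at hk
    have : (0:ℝ) < k := hk ▸ hx0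
    have : (k:ℝ) < 1 := hk ▸ hx1
    have h1 : (0:ℤ) < k := by exact_mod_cast ‹(0:ℝ) < k›
    have h2 : k < 1 := by exact_mod_cast ‹(k:ℝ) < 1›
    omega
  · apply hxirr
    have hfloor : ⌊(cantorProd a n : ℝ) * x⌋ = k := by rw [← hk, Int.floor_intCast]
    have hfx : ⌊x⌋ = 0 := Int.floor_eq_zero_iff.mpr ⟨le_of_lt hx0, hx1⟩
    have hsum := telescope ha1 x n
    rw [hfloor, hfx, hk] at hsum
    have hPn : ((cantorProd a n : ℕ) : ℝ) ≠ 0 := by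
      exact_mod_cast (cantorProd_pos ha1 n).ne'
    rw [mul_comm, mul_div_assoc, div_self hPn, mul_one] at hsum
    norm_num at hsum
    refine ⟨⟨hx0, hx1⟩, n, hn0, fun i => (cantorDigit a x i).toNat, fun i => ?_, ?_⟩
    · have h1 := cantorDigit_le ha1 x i
      have h2 := cantorDigit_nonneg (a := a) x i
      show (cantorDigit a x i).toNat < a i
      omega
    · refine hsum.symm.trans (Finset.sum_congr rfl fun i _ => ?_)
      congr 1
      · have h2 := Int.toNat_of_nonneg (cantorDigit_nonneg (a := a) x i)
        exact_mod_cast h2.symm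
      · unfold cantorProd; push_cast; ring

/-- `f` is continuous at every point of `[0,1]` that is not Q-rational. -/
theorem stmt3 (q : ℕ) (hq : 2 ≤ q) (a : ℕ → ℕ) (ha : ∀ n, 2 ≤ a n ∧ a n ≤ q)
    (x : ℝ) (hx : x ∈ Set.Icc (0 : ℝ) 1) (hxirr : ¬ QRational a x) :
    ContinuousWithinAt (cantorF a q) (Set.Icc (0 : ℝ) 1) x := by
  have ha1 : ∀ n, 1 ≤ a n := fun n => le_trans one_le_two (ha n).1
  have hq1 : (1:ℝ) < q := by exact_mod_cast lt_of_lt_of_le one_lt_two hq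
  have hQpos : ∀ n, (0:ℝ) < (cantorProd a n : ℝ) := fun n => by
    exact_mod_cast cantorProd_pos ha1 n
  set dig : ℝ → ℕ → ℤ := fun y n => if y < 1 then cantorDigit a y n else (a n : ℤ) - 1
    with hdig
  have hdbound : ∀ y n, 0 ≤ dig y n ∧ dig y n ≤ (q:ℤ) - 1 := by
    intro y n
    have haq : (a n : ℤ) ≤ q := by exact_mod_cast (ha n).2
    have ha2 : (2:ℤ) ≤ a n := by exact_mod_cast (ha n).1
    rw [hdig]
    simp only []
    split
    · have := cantorDigit_nonneg (a := a) y n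
      have := cantorDigit_le ha1 y n
      omega
    · omega
  have habs : ∀ y, ∀ n, |(dig y n : ℝ)| ≤ (q:ℝ) - 1 := by
    intro y n
    obtain ⟨h0, h1⟩ := hdbound y n
    have h0' : (0:ℝ) ≤ (dig y n : ℝ) := by exact_mod_cast h0
    rw [abs_of_nonneg h0']
    have : ((dig y n : ℤ) : ℝ) ≤ (((q:ℤ) - 1 : ℤ) : ℝ) := by exact_mod_cast h1
    push_cast at this
    linarith
  have hF : ∀ y : ℝ, cantorF a q y = ∑' n, (dig y n : ℝ) / (q:ℝ) ^ (n+1) := by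
    intro y
    unfold cantorF
    rw [hdig]
    by_cases hy : y < 1
    · simp only [if_pos hy]
    · simp only [if_neg hy]
      apply tsum_congr
      intro n
      congr 1
      push_cast
      ring
  rw [Metric.continuousWithinAt_iff]
  intro ε hε
  obtain ⟨N, hN⟩ := exists_pow_lt_of_lt_one (show (0:ℝ) < ε/2 by positivity)
    (inv_lt_one_of_one_lt₀ hq1)
  suffices H : ∃ δ > 0, ∀ y ∈ Set.Icc (0:ℝ) 1, |y - x| < δ → ∀ n < N, dig y n = dig x n by
    obtain ⟨δ, hδ0, hδ⟩ := H
    refine ⟨δ, hδ0, ?_⟩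
    intro y hy hyd
    rw [Real.dist_eq] at hyd ⊢
    rw [hF y, hF x]
    calc |(∑' n, (dig y n : ℝ)/(q:ℝ)^(n+1)) - ∑' n, (dig x n : ℝ)/(q:ℝ)^(n+1)|
        ≤ 2 * ((q:ℝ)⁻¹) ^ N :=
          tsum_digit_diff_le hq1 _ _ (habs y) (habs x) N (hδ y hy hyd)
      _ < ε := by linarith
  -- three cases
  rcases eq_or_lt_of_le hx.2 with hx1 | hx1
  · -- x = 1
    refine ⟨((cantorProd a (N+1) : ℝ))⁻¹, by have := hQpos (N+1); positivity, ?_⟩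
    intro y hy hyd n hn
    rcases eq_or_lt_of_le hy.2 with hy1 | hy1
    · rw [hy1, hx1]
    have hx1' : ¬ (x < 1) := by rw [hx1]; exact lt_irrefl 1
    have hfl : ∀ m ≤ N, ⌊(cantorProd a m : ℝ) * y⌋ = (cantorProd a m : ℤ) - 1 := by
      intro m hm
      have hPm := hQpos m
      have hmono : (cantorProd a m : ℝ) ≤ (cantorProd a (N+1) : ℝ) := by
        exact_mod_cast cantorProd_mono ha1 (by omega : m ≤ N+1)
      have hy' : 1 - ((cantorProd a (N+1) : ℝ))⁻¹ < y := by
        have h5 := abs_lt.mp hyd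
        rw [hx1] at h5
        linarith [h5.1]
      have hle : (cantorProd a m : ℝ) * ((cantorProd a (N+1) : ℝ))⁻¹ ≤ 1 := by
        rw [mul_inv_le_iff₀ (hQpos (N+1)), one_mul]
        exact hmono
      rw [Int.floor_eq_iff]
      constructor
      · push_cast
        nlinarith
      · push_cast
        nlinarith
    have hn1 : n + 1 ≤ N := by omega
    rw [hdig]
    simp only [if_pos hy1, if_neg hx1']
    unfold cantorDigit
    rw [hfl (n+1) hn1, hfl n (by omega), cantorProd_succ]
    push_cast
    ring
  rcases eq_or_lt_of_le hx.1 with hx0 | hx0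
  · -- x = 0
    refine ⟨((cantorProd a (N+1) : ℝ))⁻¹, by have := hQpos (N+1); positivity, ?_⟩
    intro y hy hyd n hn
    have hP2 : (2:ℝ) ≤ (cantorProd a (N+1) : ℝ) := by
      have h2 : 2 ≤ cantorProd a (N+1) := by
        have h3 := cantorProd_mono ha1 (show 1 ≤ N+1 by omega)
        have h4 : cantorProd a 1 = a 0 := by
          rw [show (1:ℕ) = 0+1 from rfl, cantorProd_succ, cantorProd_zero, one_mul]
        have h5 := (ha 0).1
        omega
      exact_mod_cast h2
    have hy0 : (0:ℝ) ≤ y := hy.1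
    have hyδ : y < ((cantorProd a (N+1) : ℝ))⁻¹ := by
      rw [← hx0, sub_zero, abs_of_nonneg hy0] at hyd
      exact hyd
    have hylt : y < 1 :=
      lt_of_lt_of_le hyδ (le_of_lt (inv_lt_one_of_one_lt₀ (by linarith)))
    have hfl : ∀ m, m ≤ N → ⌊(cantorProd a m : ℝ) * y⌋ = 0 := by
      intro m hm
      have hPm := hQpos m
      have hmono : (cantorProd a m : ℝ) ≤ (cantorProd a (N+1) : ℝ) := by
        exact_mod_cast cantorProd_mono ha1 (by omega : m ≤ N+1)
      rw [Int.floor_eq_zero_iff]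
      refine Set.mem_Ico.mpr ⟨by positivity, ?_⟩
      have e1 : (cantorProd a m : ℝ) * y < (cantorProd a m : ℝ) * ((cantorProd a (N+1) : ℝ))⁻¹ :=
        mul_lt_mul_of_pos_left hyδ hPm
      have e2 : (cantorProd a (N+1) : ℝ) * ((cantorProd a (N+1) : ℝ))⁻¹ = 1 :=
        mul_inv_cancel₀ (ne_of_gt (hQpos (N+1)))
      have e3 : (0:ℝ) ≤ ((cantorProd a (N+1) : ℝ))⁻¹ := by positivity
      nlinarith
    rw [hdig]
    simp only [if_pos hylt, if_pos hx1]
    unfold cantorDigit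
    rw [hfl (n+1) (by omega), hfl n (by omega), ← hx0]
    simp
  · -- x ∈ (0,1)
    have hni : ∀ m : ℕ, ∀ k : ℤ, (k:ℝ) ≠ (cantorProd a m : ℝ) * x :=
      fun m k hk => absurd (cantor_not_int ha hx0 hx1 hxirr m k hk) not_false
    obtain ⟨δ1, hδ10, H1⟩ := floors_stable ha1 x hni (N+1)
    refine ⟨min δ1 (1 - x), lt_min hδ10 (by linarith), ?_⟩
    intro y hy hyd n hn
    have hyδ1 : |y - x| < δ1 := lt_of_lt_of_le hyd (min_le_left _ _)
    have hylt : y < 1 := by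
      have h1 : y - x ≤ |y - x| := le_abs_self _
      have h2 : |y - x| < 1 - x := lt_of_lt_of_le hyd (min_le_right _ _)
      linarith
    rw [hdig]
    simp only [if_pos hylt, if_pos hx1]
    unfold cantorDigit
    rw [H1 y hyδ1 (n+1) (by omega), H1 y hyδ1 n (by omega)]
end

section
/- If q_n ≤ q − 1 for infinitely many n, then lim_{n→∞} (q_1 q_2 ⋯ q_n) · Σ_{j=n+1}^∞ (q_j − 1)/q^j = 0. (The quantity (q_1⋯q_n)·Σ_{j>n}(q_j−1)/q^j is the ratio of the change of f on a rank-n cylinder of the Cantor series expansion to the length 1/(q_1⋯q_n) of that cylinder.) -/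
open Filter Topology

/-- 0-indexed: `a n` is the paper's `q_{n+1}`.
If `q_n ≤ q - 1` for infinitely many `n`, then
`(q_1⋯q_n) · ∑_{j>n} (q_j - 1)/q^j → 0` as `n → ∞`. -/
theorem stmt6 (q : ℕ) (hq : 2 ≤ q) (a : ℕ → ℕ) (ha : ∀ n, 2 ≤ a n ∧ a n ≤ q)
    (hinf : {n : ℕ | a n ≤ q - 1}.Infinite) :
    Tendsto
      (fun n : ℕ => (∏ j ∈ Finset.range n, (a j : ℝ)) *
        ∑' j : ℕ, ((a (n + j) : ℝ) - 1) / (q : ℝ) ^ (n + j + 1))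
      atTop (nhds 0) := by
  have hq0 : (0:ℝ) < q := by positivity
  have hq1 : (1:ℝ) < q := by exact_mod_cast hq.trans_lt' one_lt_two
  set p : ℕ → Prop := fun n => a n ≤ q - 1 with hp
  have hdec : DecidablePred p := fun n => Nat.decLe _ _
  set r : ℝ := ((q:ℝ) - 1) / q with hr
  have hr0 : 0 ≤ r := by
    apply div_nonneg _ hq0.le
    linarith
  have hr1 : r < 1 := by
    rw [hr, div_lt_one hq0]; linarith
  have hcast : ((q - 1 : ℕ) : ℝ) = (q:ℝ) - 1 := by
    rw [Nat.cast_sub (by omega)]; norm_num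
  -- count tends to atTop
  have hcount : Tendsto (fun n => Nat.count p n) atTop atTop := by
    apply tendsto_atTop_atTop_of_monotone (Nat.count_monotone p)
    intro b
    exact ⟨Nat.nth p b, (Nat.count_nth_of_infinite hinf b).ge⟩
  have hg : Tendsto (fun n => r ^ Nat.count p n) atTop (nhds 0) :=
    (tendsto_pow_atTop_nhds_zero_of_lt_one hr0 hr1).comp hcount
  -- summability facts
  have hqinv : (1:ℝ)/q < 1 := by rw [div_lt_one hq0]; exact hq1
  have hrw : ∀ n : ℕ, (fun j : ℕ => ((q:ℝ) - 1) / (q:ℝ) ^ (n + j + 1))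
      = fun j : ℕ => (((q:ℝ) - 1) / (q:ℝ) ^ (n + 1)) * ((1:ℝ)/q) ^ j := by
    intro n
    funext j
    rw [div_pow, one_pow, show n + j + 1 = (n + 1) + j by ring, pow_add, div_mul_eq_div_div, div_eq_mul_one_div]
  have hmaj : ∀ n : ℕ, Summable (fun j : ℕ => ((q:ℝ) - 1) / (q:ℝ) ^ (n + j + 1)) := by
    intro n
    rw [hrw n]
    exact (summable_geometric_of_lt_one (by positivity) hqinv).mul_left _
  have htsum : ∀ n : ℕ, (∑' j:ℕ, ((q:ℝ)-1)/(q:ℝ)^(n+j+1)) = 1/(q:ℝ)^n := by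
    intro n
    rw [hrw n, tsum_mul_left, tsum_geometric_of_lt_one (by positivity) hqinv]
    have h1 : (1:ℝ) - 1/q ≠ 0 := by
      rw [sub_ne_zero]
      intro h
      rw [eq_comm, div_eq_one_iff_eq hq0.ne'] at h
      linarith
    have hq1' : (q:ℝ) - 1 ≠ 0 := by linarith
    have h2 : (1:ℝ) - 1/q = ((q:ℝ)-1)/q := by field_simp
    rw [h2, inv_div, pow_succ]
    field_simp
  have hterm : ∀ n j : ℕ, 0 ≤ ((a (n + j) : ℝ) - 1) / (q : ℝ) ^ (n + j + 1) := by
    intro n j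
    apply div_nonneg _ (by positivity)
    have h2 : (2:ℝ) ≤ (a (n+j) : ℝ) := by exact_mod_cast (ha (n + j)).1
    linarith
  have htermle : ∀ n j : ℕ, ((a (n + j) : ℝ) - 1) / (q : ℝ) ^ (n + j + 1)
      ≤ ((q:ℝ) - 1) / (q:ℝ) ^ (n + j + 1) := by
    intro n j
    have h2 : (a (n+j) : ℝ) ≤ (q:ℝ) := by exact_mod_cast (ha (n + j)).2
    gcongr
  have hsum : ∀ n : ℕ, Summable (fun j : ℕ => ((a (n + j) : ℝ) - 1) / (q : ℝ) ^ (n + j + 1)) := by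
    intro n
    exact Summable.of_nonneg_of_le (hterm n) (htermle n) (hmaj n)
  have key : ∀ n, (∏ j ∈ Finset.range n, (a j:ℝ)) * (1/(q:ℝ)^n) ≤ r ^ Nat.count p n := by
    intro n
    rw [Nat.count_eq_card_filter_range]
    have heq : (∏ j ∈ Finset.range n, (a j:ℝ)) * (1/(q:ℝ)^n)
        = ∏ j ∈ Finset.range n, ((a j:ℝ)/q) := by
      rw [Finset.prod_div_distrib, Finset.prod_const, Finset.card_range]
      ring
    rw [heq]
    calc ∏ j ∈ Finset.range n, ((a j:ℝ)/q)
        ≤ ∏ j ∈ Finset.range n, (if p j then r else 1) := by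
          apply Finset.prod_le_prod
          · intro i _; positivity
          · intro i _
            by_cases h : p i
            · rw [if_pos h]
              have : (a i : ℝ) ≤ (q:ℝ) - 1 := by
                rw [← hcast]; exact_mod_cast h
              rw [hr]
              gcongr
            · rw [if_neg h, div_le_one hq0]
              exact_mod_cast (ha i).2
      _ = r ^ (Finset.range n |>.filter p).card := by
          rw [Finset.prod_ite, Finset.prod_const, Finset.prod_const, one_pow, mul_one]
  apply squeeze_zero (fun n => mul_nonneg (Finset.prod_nonneg fun i _ => by positivity)
    (tsum_nonneg (hterm n))) _ hg
  intro n
  calc (∏ j ∈ Finset.range n, (a j : ℝ)) *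
        ∑' j : ℕ, ((a (n + j) : ℝ) - 1) / (q : ℝ) ^ (n + j + 1)
      ≤ (∏ j ∈ Finset.range n, (a j : ℝ)) * (1/(q:ℝ)^n) := by
        apply mul_le_mul_of_nonneg_left _ (Finset.prod_nonneg fun i _ => by positivity)
        rw [← htsum n]
        exact Summable.tsum_le_tsum (htermle n) (hsum n) (hmaj n)
    _ ≤ r ^ Nat.count p n := key n
end

section
/- If q_n ≤ q − 1 for infinitely many n, then the derivative of f is zero Lebesgue-almost everywhere on [0,1]; that is, the strictly increasing function f is singular. -/
open Filter Topology MeasureTheory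

namespace Stmt7Aux

variable {a : ℕ → ℕ} {q : ℕ}

lemma prod_pos (ha : ∀ n, 2 ≤ a n ∧ a n ≤ q) (n : ℕ) : 0 < cantorProd a n :=
  Finset.prod_pos fun j _ => lt_of_lt_of_le two_pos (ha j).1

lemma prod_succ (a : ℕ → ℕ) (n : ℕ) : cantorProd a (n + 1) = cantorProd a n * a n :=
  Finset.prod_range_succ a n

lemma two_pow_le_prod (ha : ∀ n, 2 ≤ a n ∧ a n ≤ q) (n : ℕ) : 2 ^ n ≤ cantorProd a n := by
  unfold cantorProd
  calc 2 ^ n = ∏ _j ∈ Finset.range n, 2 := by simp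
  _ ≤ ∏ j ∈ Finset.range n, a j := Finset.prod_le_prod' fun j _ => (ha j).1

lemma digit_nonneg (ha : ∀ n, 2 ≤ a n ∧ a n ≤ q) (x : ℝ) (n : ℕ) :
    0 ≤ cantorDigit a x n := by
  unfold cantorDigit
  have h : ((a n : ℤ) * ⌊(cantorProd a n : ℝ) * x⌋ : ℤ) ≤ ⌊(cantorProd a (n+1) : ℝ) * x⌋ := by
    rw [Int.le_floor]
    have : (cantorProd a (n+1) : ℝ) * x = (a n : ℝ) * ((cantorProd a n : ℝ) * x) := by
      rw [prod_succ]; push_cast; ring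
    rw [this]
    push_cast
    exact mul_le_mul_of_nonneg_left (Int.floor_le _) (by positivity)
  omega

lemma digit_le (ha : ∀ n, 2 ≤ a n ∧ a n ≤ q) (x : ℝ) (n : ℕ) :
    cantorDigit a x n ≤ (a n : ℤ) - 1 := by
  unfold cantorDigit
  have h : ⌊(cantorProd a (n+1) : ℝ) * x⌋ < (a n : ℤ) * ⌊(cantorProd a n : ℝ) * x⌋ + a n := by
    rw [Int.floor_lt]
    have h1 : (cantorProd a (n+1) : ℝ) * x = (a n : ℝ) * ((cantorProd a n : ℝ) * x) := by
      rw [prod_succ]; push_cast; ring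
    rw [h1]
    push_cast
    have h2 : (cantorProd a n : ℝ) * x < (⌊(cantorProd a n : ℝ) * x⌋ : ℝ) + 1 :=
      Int.lt_floor_add_one _
    have h3 : (0:ℝ) < (a n : ℝ) := by
      have := (ha n).1; positivity
    nlinarith
  omega

lemma digit_le_q (hq : 2 ≤ q) (ha : ∀ n, 2 ≤ a n ∧ a n ≤ q) (x : ℝ) (n : ℕ) :
    cantorDigit a x n ≤ (q : ℤ) - 1 := by
  have := digit_le ha x n
  have := (ha n).2
  omega

lemma summable_aux (hq : 2 ≤ q) {g : ℕ → ℝ} (h0 : ∀ n, 0 ≤ g n) (h1 : ∀ n, g n ≤ q) :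
    Summable (fun n => g n / (q:ℝ) ^ (n + 1)) := by
  have hq0 : (0:ℝ) < q := by positivity
  have hq1 : (1:ℝ)/q < 1 := by
    rw [div_lt_one hq0]; exact_mod_cast by omega
  apply Summable.of_nonneg_of_le (fun n => div_nonneg (h0 n) (by positivity))
    (fun n => ?_) (summable_geometric_of_lt_one (le_of_lt (by positivity)) hq1)
  rw [div_le_iff₀ (by positivity)]
  have : ((1:ℝ)/q) ^ n * (q:ℝ) ^ (n+1) = q := by
    rw [one_div, inv_pow, pow_succ]
    field_simp
  rw [this]; exact h1 n

lemma summable_digit (hq : 2 ≤ q) (ha : ∀ n, 2 ≤ a n ∧ a n ≤ q) (x : ℝ) :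
    Summable (fun n => (cantorDigit a x n : ℝ) / (q:ℝ) ^ (n + 1)) := by
  apply summable_aux hq (fun n => by exact_mod_cast digit_nonneg ha x n)
  intro n
  have := digit_le_q hq ha x n
  exact_mod_cast this.trans (by omega)

lemma summable_top (hq : 2 ≤ q) (ha : ∀ n, 2 ≤ a n ∧ a n ≤ q) :
    Summable (fun n => ((a n : ℝ) - 1) / (q:ℝ) ^ (n + 1)) := by
  apply summable_aux hq
  · intro n; have := (ha n).1; simp only [sub_nonneg]; exact_mod_cast by omega
  · intro n; have := (ha n).2
    have : (a n : ℝ) ≤ q := by exact_mod_cast this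
    linarith

lemma geom_tail (hq : 2 ≤ q) (m : ℕ) :
    ∑' n : ℕ, ((q:ℝ) - 1) / (q:ℝ) ^ (n + m + 1) = (1/(q:ℝ)) ^ m := by
  have hq0 : (0:ℝ) < q := by positivity
  have hq0' : (q:ℝ) ≠ 0 := ne_of_gt hq0
  have hq1 : (1:ℝ)/q < 1 := by
    rw [div_lt_one hq0]; exact_mod_cast by omega
  have hrw : ∀ n : ℕ, ((q:ℝ) - 1) / (q:ℝ) ^ (n + m + 1)
      = (((q:ℝ) - 1) / (q:ℝ) ^ (m + 1)) * ((1/(q:ℝ)) ^ n) := by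
    intro n
    rw [one_div, inv_pow]
    rw [show n + m + 1 = (m + 1) + n by ring, pow_add]
    field_simp
  calc ∑' n : ℕ, ((q:ℝ) - 1) / (q:ℝ) ^ (n + m + 1)
      = ∑' n : ℕ, (((q:ℝ) - 1) / (q:ℝ) ^ (m + 1)) * ((1/(q:ℝ)) ^ n) := by
        exact tsum_congr hrw
    _ = (((q:ℝ) - 1) / (q:ℝ) ^ (m + 1)) * ∑' n : ℕ, ((1/(q:ℝ)) ^ n) := tsum_mul_left
    _ = (((q:ℝ) - 1) / (q:ℝ) ^ (m + 1)) * (1 - 1/(q:ℝ))⁻¹ := by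
        rw [tsum_geometric_of_lt_one (by positivity) hq1]
    _ = (1/(q:ℝ)) ^ m := by
        have h1 : (1:ℝ) - 1/q = ((q:ℝ) - 1)/q := by field_simp
        have hq2 : (q:ℝ) - 1 ≠ 0 := by
          have : (2:ℝ) ≤ q := by exact_mod_cast hq
          linarith
        rw [h1, one_div, inv_pow, pow_succ]
        field_simp

lemma tail_bound (hq : 2 ≤ q) (ha : ∀ n, 2 ≤ a n ∧ a n ≤ q) (u v : ℝ) (m : ℕ) :
    |(∑' n : ℕ, (cantorDigit a v n : ℝ) / (q:ℝ) ^ (n + 1))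
      - (∑' n : ℕ, (cantorDigit a u n : ℝ) / (q:ℝ) ^ (n + 1))
      - ∑ j ∈ Finset.range m,
          ((cantorDigit a v j : ℝ) - (cantorDigit a u j : ℝ)) / (q:ℝ) ^ (j + 1)|
      ≤ (1/(q:ℝ)) ^ m := by
  have hSu := summable_digit hq ha u
  have hSv := summable_digit hq ha v
  set g : ℕ → ℝ := fun n => ((cantorDigit a v n : ℝ) - (cantorDigit a u n : ℝ)) / (q:ℝ) ^ (n + 1)
    with hg
  have hgS : Summable g := by
    have := hSv.sub hSu
    refine this.congr (fun n => ?_)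
    rw [hg]; ring
  have hsub : (∑' n : ℕ, (cantorDigit a v n : ℝ) / (q:ℝ) ^ (n + 1))
      - (∑' n : ℕ, (cantorDigit a u n : ℝ) / (q:ℝ) ^ (n + 1)) = ∑' n, g n := by
    rw [← Summable.tsum_sub hSv hSu]
    apply tsum_congr; intro n; rw [hg]; ring
  rw [hsub]
  have hsplit := Summable.sum_add_tsum_nat_add m hgS
  have : (∑' n, g n) - ∑ j ∈ Finset.range m, g j = ∑' n, g (n + m) := by
    rw [← hsplit]; ring
  rw [this]
  have hbound : ∀ n : ℕ, ‖g (n + m)‖ ≤ ((q:ℝ) - 1) / (q:ℝ) ^ (n + m + 1) := by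
    intro n
    have h1 : 0 ≤ cantorDigit a u (n+m) := digit_nonneg ha u _
    have h2 : 0 ≤ cantorDigit a v (n+m) := digit_nonneg ha v _
    have h3 := digit_le_q hq ha u (n+m)
    have h4 := digit_le_q hq ha v (n+m)
    have habs : |(cantorDigit a v (n+m) : ℝ) - (cantorDigit a u (n+m) : ℝ)| ≤ (q:ℝ) - 1 := by
      rw [abs_sub_le_iff]
      constructor <;>
      · push_cast
        have h3' : (cantorDigit a u (n+m) : ℝ) ≤ (q:ℝ) - 1 := by exact_mod_cast h3
        have h4' : (cantorDigit a v (n+m) : ℝ) ≤ (q:ℝ) - 1 := by exact_mod_cast h4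
        have h1' : (0:ℝ) ≤ (cantorDigit a u (n+m) : ℝ) := by exact_mod_cast h1
        have h2' : (0:ℝ) ≤ (cantorDigit a v (n+m) : ℝ) := by exact_mod_cast h2
        linarith
    rw [hg]
    simp only [Real.norm_eq_abs, abs_div]
    rw [abs_of_pos (show (0:ℝ) < (q:ℝ)^(n+m+1) by positivity)]
    exact (div_le_div_iff_of_pos_right (by positivity)).mpr habs
  have hshift : Summable (fun n => g (n + m)) := hgS.comp_injective (add_left_injective m)
  have hnorm : Summable (fun n => ‖g (n + m)‖) := hshift.abs
  have hgeo : Summable (fun n => ((q:ℝ) - 1) / (q:ℝ) ^ (n + m + 1)) := by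
    have hb : Summable (fun n => ((q:ℝ) - 1) / (q:ℝ) ^ (n + 1)) := by
      apply summable_aux hq
      · intro _; have : (2:ℝ) ≤ q := by exact_mod_cast hq
        linarith
      · intro _; have : (2:ℝ) ≤ q := by exact_mod_cast hq
        linarith
    exact hb.comp_injective (add_left_injective m)
  calc |∑' n, g (n + m)| ≤ ∑' n, ‖g (n + m)‖ := norm_tsum_le_tsum_norm hnorm
    _ ≤ ∑' n : ℕ, ((q:ℝ) - 1) / (q:ℝ) ^ (n + m + 1) := Summable.tsum_le_tsum hbound hnorm hgeo
    _ = (1/(q:ℝ)) ^ m := geom_tail hq m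

lemma floor_step {b : ℕ} (hb : 0 < b) {y z : ℝ} (h : ⌊(b:ℝ) * y⌋ = ⌊(b:ℝ) * z⌋) :
    ⌊y⌋ = ⌊z⌋ := by
  have hb' : (0:ℝ) < b := by exact_mod_cast hb
  have key : ∀ w : ℝ, ⌊w⌋ = ⌊((⌊(b:ℝ) * w⌋ : ℤ) : ℝ) / b⌋ := by
    intro w
    apply le_antisymm
    · rw [Int.le_floor, le_div_iff₀ hb']
      have : ((b:ℤ) * ⌊w⌋ : ℤ) ≤ ⌊(b:ℝ) * w⌋ := by
        rw [Int.le_floor]; push_cast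
        exact mul_le_mul_of_nonneg_left (Int.floor_le w) hb'.le
      calc ((⌊w⌋ : ℝ) * b) = ((b * ⌊w⌋ : ℤ) : ℝ) := by push_cast; ring
        _ ≤ ((⌊(b:ℝ) * w⌋ : ℤ) : ℝ) := by exact_mod_cast this
    · apply Int.floor_le_floor
      rw [div_le_iff₀ hb']
      calc ((⌊(b:ℝ) * w⌋ : ℤ) : ℝ) ≤ (b:ℝ) * w := Int.floor_le _
        _ = w * b := by ring
  rw [key y, key z, h]

lemma floor_down (ha : ∀ n, 2 ≤ a n ∧ a n ≤ q) {u v : ℝ} :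
    ∀ n : ℕ, ⌊(cantorProd a n : ℝ) * u⌋ = ⌊(cantorProd a n : ℝ) * v⌋ →
      ∀ j ≤ n, ⌊(cantorProd a j : ℝ) * u⌋ = ⌊(cantorProd a j : ℝ) * v⌋ := by
  intro n
  induction n with
  | zero =>
    intro h j hj
    have : j = 0 := by omega
    rw [this]; exact h
  | succ n ih =>
    intro h j hj
    rcases Nat.lt_or_ge j (n+1) with hlt | hge
    · have hstep : ⌊(cantorProd a n : ℝ) * u⌋ = ⌊(cantorProd a n : ℝ) * v⌋ := by
        apply floor_step (show 0 < a n from lt_of_lt_of_le two_pos (ha n).1)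
        have h1 : (a n : ℝ) * ((cantorProd a n : ℝ) * u) = (cantorProd a (n+1) : ℝ) * u := by
          rw [prod_succ]; push_cast; ring
        have h2 : (a n : ℝ) * ((cantorProd a n : ℝ) * v) = (cantorProd a (n+1) : ℝ) * v := by
          rw [prod_succ]; push_cast; ring
        rw [h1, h2]; exact h
      exact ih hstep j (by omega)
    · have : j = n + 1 := by omega
      rw [this]; exact h

lemma digit_eq_of_floor_eq (ha : ∀ n, 2 ≤ a n ∧ a n ≤ q) {u v : ℝ} {n : ℕ}
    (h : ⌊(cantorProd a n : ℝ) * u⌋ = ⌊(cantorProd a n : ℝ) * v⌋)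
    {j : ℕ} (hj : j < n) : cantorDigit a u j = cantorDigit a v j := by
  unfold cantorDigit
  rw [floor_down ha n h j (by omega), floor_down ha n h (j+1) (by omega)]

lemma tsum_mono (hq : 2 ≤ q) (ha : ∀ n, 2 ≤ a n ∧ a n ≤ q) {u v : ℝ}
    (h0 : 0 ≤ u) (huv : u ≤ v) (hv : v < 1) :
    (∑' n : ℕ, (cantorDigit a u n : ℝ) / (q:ℝ) ^ (n + 1))
      ≤ ∑' n : ℕ, (cantorDigit a v n : ℝ) / (q:ℝ) ^ (n + 1) := by
  by_cases hall : ∀ n : ℕ, ⌊(cantorProd a n : ℝ) * u⌋ = ⌊(cantorProd a n : ℝ) * v⌋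
  · apply le_of_eq
    apply tsum_congr
    intro n
    unfold cantorDigit
    rw [hall n, hall (n+1)]
  · push_neg at hall
    have hfind := Nat.find_spec hall
    have hne0 : Nat.find hall ≠ 0 := by
      intro h0'
      apply Nat.find_spec hall
      rw [h0']
      have hu : ⌊(cantorProd a 0 : ℝ) * u⌋ = 0 := by
        simp only [cantorProd, Finset.range_zero, Finset.prod_empty, Nat.cast_one, one_mul]
        exact Int.floor_eq_zero_iff.mpr ⟨h0, lt_of_le_of_lt huv hv⟩
      have hvf : ⌊(cantorProd a 0 : ℝ) * v⌋ = 0 := by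
        simp only [cantorProd, Finset.range_zero, Finset.prod_empty, Nat.cast_one, one_mul]
        exact Int.floor_eq_zero_iff.mpr ⟨le_trans h0 huv, hv⟩
      rw [hu, hvf]
    obtain ⟨m, hm⟩ := Nat.exists_eq_succ_of_ne_zero hne0
    have hflm : ⌊(cantorProd a m : ℝ) * u⌋ = ⌊(cantorProd a m : ℝ) * v⌋ := by
      have := Nat.find_min hall (show m < Nat.find hall by omega)
      by_contra hc; exact this hc
    have hfln : ⌊(cantorProd a (m+1) : ℝ) * u⌋ ≠ ⌊(cantorProd a (m+1) : ℝ) * v⌋ := by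
      rw [hm] at hfind
      exact hfind
    have hle : ⌊(cantorProd a (m+1) : ℝ) * u⌋ ≤ ⌊(cantorProd a (m+1) : ℝ) * v⌋ :=
      Int.floor_le_floor (mul_le_mul_of_nonneg_left huv (by positivity))
    have hlt : ⌊(cantorProd a (m+1) : ℝ) * u⌋ < ⌊(cantorProd a (m+1) : ℝ) * v⌋ := by omega
    have hdm : cantorDigit a u m + 1 ≤ cantorDigit a v m := by
      unfold cantorDigit
      rw [hflm]
      omega
    have hdj : ∀ j < m, cantorDigit a u j = cantorDigit a v j :=
      fun j hj => digit_eq_of_floor_eq ha hflm hj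
    have hsum : ∑ j ∈ Finset.range (m+1),
        ((cantorDigit a v j : ℝ) - (cantorDigit a u j : ℝ)) / (q:ℝ) ^ (j + 1)
        = ((cantorDigit a v m : ℝ) - (cantorDigit a u m : ℝ)) / (q:ℝ) ^ (m + 1) := by
      rw [Finset.sum_range_succ]
      have : ∑ j ∈ Finset.range m,
          ((cantorDigit a v j : ℝ) - (cantorDigit a u j : ℝ)) / (q:ℝ) ^ (j + 1) = 0 := by
        apply Finset.sum_eq_zero
        intro j hj
        rw [hdj j (Finset.mem_range.mp hj)]
        simp
      rw [this, zero_add]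
    have hkey := tail_bound hq ha u v (m+1)
    rw [hsum] at hkey
    have h1 : (1/(q:ℝ)) ^ (m+1)
        ≤ ((cantorDigit a v m : ℝ) - (cantorDigit a u m : ℝ)) / (q:ℝ) ^ (m + 1) := by
      have hnum : (1:ℝ) ≤ (cantorDigit a v m : ℝ) - (cantorDigit a u m : ℝ) := by
        have : (1:ℤ) ≤ cantorDigit a v m - cantorDigit a u m := by omega
        exact_mod_cast this
      rw [one_div, inv_pow, inv_eq_one_div, div_le_div_iff₀ (by positivity) (by positivity)]
      nlinarith [pow_pos (show (0:ℝ) < q by positivity) (m+1)]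
    rw [abs_le] at hkey
    linarith [hkey.1]

lemma F_monotoneOn (hq : 2 ≤ q) (ha : ∀ n, 2 ≤ a n ∧ a n ≤ q) :
    MonotoneOn (cantorF a q) (Set.Icc (0:ℝ) 1) := by
  intro u hu v hv huv
  unfold cantorF
  by_cases hv1 : v < 1
  · rw [if_pos (lt_of_le_of_lt huv hv1), if_pos hv1]
    exact tsum_mono hq ha hu.1 huv hv1
  · rw [if_neg hv1]
    by_cases hu1 : u < 1
    · rw [if_pos hu1]
      apply Summable.tsum_le_tsum _ (summable_digit hq ha u) (summable_top hq ha)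
      intro n
      apply div_le_div_of_nonneg_right _ (by positivity)
      have h2 : ((cantorDigit a u n : ℝ)) ≤ (a n : ℝ) - 1 := by
        exact_mod_cast digit_le ha u n
      exact h2
    · rw [if_neg hu1]

lemma slope_tendsto {f : ℝ → ℝ} {d x : ℝ} (hf : HasDerivAt f d x) {u v : ℕ → ℝ}
    (hu : ∀ n, u n ≤ x) (hv : ∀ n, x ≤ v n) (huv : ∀ n, u n < v n)
    (hlim : Tendsto (fun n => v n - u n) atTop (𝓝 0)) :
    Tendsto (fun n => (f (v n) - f (u n)) / (v n - u n)) atTop (𝓝 d) := by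
  have hux : Tendsto u atTop (𝓝 x) := by
    refine tendsto_of_tendsto_of_tendsto_of_le_of_le
      (g := fun n => x - (v n - u n)) (h := fun _ => x) ?_ ?_ ?_ ?_
    · have : Tendsto (fun n => x - (v n - u n)) atTop (𝓝 (x - 0)) :=
        tendsto_const_nhds.sub hlim
      simpa using this
    · exact tendsto_const_nhds
    · intro n; simp only; linarith [hv n]
    · exact hu
  have hvx : Tendsto v atTop (𝓝 x) := by
    refine tendsto_of_tendsto_of_tendsto_of_le_of_le
      (g := fun _ => x) (h := fun n => x + (v n - u n)) ?_ ?_ ?_ ?_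
    · exact tendsto_const_nhds
    · have : Tendsto (fun n => x + (v n - u n)) atTop (𝓝 (x + 0)) :=
        tendsto_const_nhds.add hlim
      simpa using this
    · exact hv
    · intro n; simp only; linarith [hu n]
  rw [Metric.tendsto_atTop]
  intro ε hε
  have hlo := hasDerivAt_iff_isLittleO.mp hf
  have hb := (Asymptotics.isLittleO_iff.mp hlo) (show (0:ℝ) < ε/2 by linarith)
  obtain ⟨N, hN⟩ := eventually_atTop.mp ((hux.eventually hb).and (hvx.eventually hb))
  refine ⟨N, fun n hn => ?_⟩
  obtain ⟨h1, h2⟩ := hN n hn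
  simp only [Real.norm_eq_abs, smul_eq_mul] at h1 h2
  have hpos : 0 < v n - u n := by have := huv n; linarith
  rw [Real.dist_eq]
  have hrw : (f (v n) - f (u n)) / (v n - u n) - d
      = ((f (v n) - f x - (v n - x) * d) - (f (u n) - f x - (u n - x) * d)) / (v n - u n) := by
    field_simp
    ring
  rw [hrw, abs_div, abs_of_pos hpos]
  have habs1 : |u n - x| = x - u n := by rw [abs_sub_comm]; exact abs_of_nonneg (by linarith [hu n])
  have habs2 : |v n - x| = v n - x := abs_of_nonneg (by linarith [hv n])
  rw [habs1] at h1; rw [habs2] at h2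
  have htri : |(f (v n) - f x - (v n - x) * d) - (f (u n) - f x - (u n - x) * d)|
      ≤ |f (v n) - f x - (v n - x) * d| + |f (u n) - f x - (u n - x) * d| := abs_sub _ _
  have hle : |(f (v n) - f x - (v n - x) * d) - (f (u n) - f x - (u n - x) * d)|
      ≤ ε / 2 * (v n - u n) := by
    have : ε / 2 * (v n - x) + ε / 2 * (x - u n) = ε / 2 * (v n - u n) := by ring
    linarith
  calc |(f (v n) - f x - (v n - x) * d) - (f (u n) - f x - (u n - x) * d)| / (v n - u n)
      ≤ (ε / 2 * (v n - u n)) / (v n - u n) := by gcongr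
    _ = ε / 2 := by field_simp
    _ < ε := by linarith

lemma card_filter_tendsto {p : ℕ → Prop} [DecidablePred p] (hinf : {n : ℕ | p n}.Infinite) :
    Tendsto (fun n => ((Finset.range n).filter p).card) atTop atTop := by
  rw [tendsto_atTop_atTop]
  intro N
  obtain ⟨T, hTS, hTcard⟩ := hinf.exists_subset_card_eq N
  refine ⟨T.sup id + 1, fun n hn => ?_⟩
  rw [← hTcard]
  apply Finset.card_le_card
  intro t ht
  rw [Finset.mem_filter, Finset.mem_range]
  constructor
  · have : t ≤ T.sup id := Finset.le_sup (f := id) ht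
    omega
  · exact hTS ht

lemma ratio_tendsto (hq : 2 ≤ q) (ha : ∀ n, 2 ≤ a n ∧ a n ≤ q)
    (hinf : {n : ℕ | a n ≤ q - 1}.Infinite) :
    Tendsto (fun n => (cantorProd a n : ℝ) / (q:ℝ) ^ n) atTop (𝓝 0) := by
  have hq0 : (0:ℝ) < q := by positivity
  set r : ℝ := ((q:ℝ) - 1) / q with hr
  have hq2 : (2:ℝ) ≤ q := by exact_mod_cast hq
  have hr0 : 0 ≤ r := by rw [hr]; apply div_nonneg <;> linarith
  have hr1 : r < 1 := by rw [hr, div_lt_one hq0]; linarith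
  have heq : ∀ n, (cantorProd a n : ℝ) / (q:ℝ) ^ n = ∏ j ∈ Finset.range n, ((a j : ℝ) / q) := by
    intro n
    rw [Finset.prod_div_distrib, Finset.prod_const, Finset.card_range]
    unfold cantorProd
    push_cast
    ring
  have hbound : ∀ n, (cantorProd a n : ℝ) / (q:ℝ) ^ n
      ≤ r ^ ((Finset.range n).filter (fun j => a j ≤ q - 1)).card := by
    intro n
    rw [heq n]
    calc ∏ j ∈ Finset.range n, ((a j : ℝ) / q)
        ≤ ∏ j ∈ Finset.range n, (if a j ≤ q - 1 then r else 1) := by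
          apply Finset.prod_le_prod
          · intro j _; have := (ha j).1; positivity
          · intro j _
            by_cases hj : a j ≤ q - 1
            · rw [if_pos hj, hr]
              have h' : (a j : ℝ) ≤ ((q - 1 : ℕ) : ℝ) := by exact_mod_cast hj
              rw [Nat.cast_sub (by omega)] at h'
              push_cast at h'
              gcongr
            · rw [if_neg hj, div_le_one hq0]
              exact_mod_cast (ha j).2
      _ = r ^ ((Finset.range n).filter (fun j => a j ≤ q - 1)).card := by
          rw [Finset.prod_ite, Finset.prod_const, Finset.prod_const_one, mul_one]
  apply squeeze_zero (fun n => by positivity) hbound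
  exact (tendsto_pow_atTop_nhds_zero_of_lt_one hr0 hr1).comp
    (card_filter_tendsto hinf)

end Stmt7Aux

/-- if `q_n ≤ q - 1` for infinitely many `n`, then the derivative of the
strictly increasing function `f` is zero Lebesgue-almost everywhere on `[0,1]`
(`f` is singular). -/
theorem stmt7 (q : ℕ) (hq : 2 ≤ q) (a : ℕ → ℕ) (ha : ∀ n, 2 ≤ a n ∧ a n ≤ q)
    (hinf : {n : ℕ | a n ≤ q - 1}.Infinite) :
    ∀ᵐ x ∂(volume : Measure ℝ), x ∈ Set.Icc (0 : ℝ) 1 →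
      HasDerivAt (cantorF a q) 0 x := by
  have hmono := Stmt7Aux.F_monotoneOn hq ha
  have hdiff := hmono.ae_differentiableWithinAt_of_mem
  have hends : ∀ᵐ x : ℝ ∂volume, x ∉ ({0, 1} : Set ℝ) := by
    rw [← measure_eq_zero_iff_ae_notMem]
    exact ((Set.finite_singleton (1:ℝ)).insert 0).countable.measure_zero _
  filter_upwards [hdiff, hends] with x hx1 hx2 hxIcc
  simp only [Set.mem_insert_iff, Set.mem_singleton_iff, not_or] at hx2
  obtain ⟨hx0ne, hx1ne⟩ := hx2
  have hx0 : 0 < x := lt_of_le_of_ne hxIcc.1 (Ne.symm hx0ne)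
  have hxlt1 : x < 1 := lt_of_le_of_ne hxIcc.2 hx1ne
  have hnhds : Set.Icc (0:ℝ) 1 ∈ 𝓝 x := Icc_mem_nhds hx0 hxlt1
  have hD : HasDerivAt (cantorF a q) (deriv (cantorF a q) x) x :=
    ((hx1 hxIcc).differentiableAt hnhds).hasDerivAt
  suffices h : deriv (cantorF a q) x = 0 by rw [← h]; exact hD
  have hq0 : (0:ℝ) < q := by positivity
  have hP : ∀ n, (0:ℝ) < (cantorProd a n : ℝ) := fun n => by
    exact_mod_cast Stmt7Aux.prod_pos ha n
  set k : ℕ → ℤ := fun n => ⌊(cantorProd a n : ℝ) * x⌋ with hk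
  set u : ℕ → ℝ := fun n => (k n : ℝ) / (cantorProd a n : ℝ) with hu
  set v : ℕ → ℝ := fun n => max x (u n + 1 / (2 * (cantorProd a n : ℝ))) with hv
  have hkn : ∀ n, k n = ⌊(cantorProd a n : ℝ) * x⌋ := fun n => by rw [hk]
  have hun : ∀ n, u n = (k n : ℝ) / (cantorProd a n : ℝ) := fun n => by rw [hu]
  have hPu : ∀ n, (cantorProd a n : ℝ) * u n = (k n : ℝ) := fun n => by
    rw [hun n, mul_comm]
    exact div_mul_cancel₀ _ (ne_of_gt (hP n))
  have hux : ∀ n, u n ≤ x := fun n => by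
    rw [hun n, div_le_iff₀ (hP n)]
    have := Int.floor_le ((cantorProd a n : ℝ) * x)
    rw [← hkn n] at this
    linarith
  have hsum1 : ∀ n, u n + 1/(cantorProd a n : ℝ) = ((k n : ℝ) + 1)/(cantorProd a n : ℝ) :=
    fun n => by rw [hun n]; ring
  have hxu1 : ∀ n, x < u n + 1/(cantorProd a n : ℝ) := fun n => by
    rw [hsum1 n, lt_div_iff₀ (hP n)]
    have := Int.lt_floor_add_one ((cantorProd a n : ℝ) * x)
    rw [← hkn n] at this
    linarith
  have hxv : ∀ n, x ≤ v n := fun n => le_max_left _ _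
  have hlow : ∀ n, u n + 1/(2*(cantorProd a n : ℝ)) ≤ v n := fun n => le_max_right _ _
  have huv : ∀ n, u n < v n := fun n => by
    have h2 : (0:ℝ) < 1/(2*(cantorProd a n : ℝ)) := by
      have := hP n; positivity
    linarith [hlow n]
  have hvu : ∀ n, v n < u n + 1/(cantorProd a n : ℝ) := fun n => by
    apply max_lt (hxu1 n)
    have hPn := hP n
    have : (1:ℝ)/(2*(cantorProd a n : ℝ)) < 1/(cantorProd a n : ℝ) := by
      rw [div_lt_div_iff₀ (by linarith) (by linarith)]
      linarith
    linarith
  have hk0 : ∀ n, 0 ≤ k n := fun n => by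
    rw [hkn n]
    apply Int.le_floor.mpr
    push_cast
    exact mul_nonneg (hP n).le hx0.le
  have hu0 : ∀ n, 0 ≤ u n := fun n => by
    rw [hun n]
    apply div_nonneg _ (hP n).le
    exact_mod_cast hk0 n
  have hkP : ∀ n, (k n : ℝ) + 1 ≤ (cantorProd a n : ℝ) := fun n => by
    have : k n < (cantorProd a n : ℤ) := by
      rw [hkn n]
      apply Int.floor_lt.mpr
      push_cast
      nlinarith [hP n]
    have h' : k n + 1 ≤ (cantorProd a n : ℤ) := this
    exact_mod_cast h'
  have hv1 : ∀ n, v n < 1 := fun n => by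
    have := hvu n
    rw [hsum1 n] at this
    have h2 : ((k n : ℝ) + 1)/(cantorProd a n : ℝ) ≤ 1 :=
      (div_le_one (hP n)).mpr (hkP n)
    linarith
  have hvsub : ∀ n, v n - u n ≤ 1/(cantorProd a n : ℝ) := fun n => by
    have := hvu n; linarith
  have hvsublow : ∀ n, 1/(2*(cantorProd a n : ℝ)) ≤ v n - u n := fun n => by
    have := hlow n; linarith
  have hlim : Tendsto (fun n => v n - u n) atTop (𝓝 0) := by
    apply squeeze_zero (fun n => by linarith [huv n]) (g := fun n => (1/2:ℝ)^n)
    · intro n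
      have h2 : ((2:ℝ))^n ≤ (cantorProd a n : ℝ) := by
        exact_mod_cast Stmt7Aux.two_pow_le_prod ha n
      have h3 : (1:ℝ)/(cantorProd a n : ℝ) ≤ 1/(2:ℝ)^n := by
        apply one_div_le_one_div_of_le (by positivity) h2
      calc v n - u n ≤ 1/(cantorProd a n : ℝ) := hvsub n
        _ ≤ 1/(2:ℝ)^n := h3
        _ = (1/2:ℝ)^n := by rw [div_pow, one_pow]
    · exact tendsto_pow_atTop_nhds_zero_of_lt_one (by norm_num) (by norm_num)
  have hslope := Stmt7Aux.slope_tendsto hD hux hxv huv hlim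
  have hfv : ∀ n, cantorF a q (v n) = ∑' m : ℕ, (cantorDigit a (v n) m : ℝ) / (q:ℝ) ^ (m+1) :=
    fun n => if_pos (hv1 n)
  have hfu : ∀ n, cantorF a q (u n) = ∑' m : ℕ, (cantorDigit a (u n) m : ℝ) / (q:ℝ) ^ (m+1) :=
    fun n => if_pos (lt_of_le_of_lt (hux n) hxlt1)
  have hfloor : ∀ n, ⌊(cantorProd a n : ℝ) * u n⌋ = ⌊(cantorProd a n : ℝ) * v n⌋ := by
    intro n
    rw [hPu n]
    rw [show ((k n : ℝ)) = ((k n : ℤ) : ℝ) by norm_num, Int.floor_intCast]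
    symm
    rw [Int.floor_eq_iff]
    constructor
    · calc ((k n : ℤ) : ℝ) = (cantorProd a n : ℝ) * u n := (hPu n).symm
        _ ≤ (cantorProd a n : ℝ) * v n :=
          mul_le_mul_of_nonneg_left (huv n).le (hP n).le
    · have h1 : v n < ((k n : ℝ) + 1)/(cantorProd a n : ℝ) := by
        have := hvu n; rw [hsum1 n] at this; exact this
      have h2 : (cantorProd a n : ℝ) * v n < (k n : ℝ) + 1 := by
        have h3 := (lt_div_iff₀ (hP n)).mp h1
        linarith
      push_cast
      exact h2
  have hfdiff : ∀ n, cantorF a q (v n) - cantorF a q (u n) ≤ (1/(q:ℝ))^n := by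
    intro n
    have htail := Stmt7Aux.tail_bound hq ha (u n) (v n) n
    have hzero : ∑ j ∈ Finset.range n,
        ((cantorDigit a (v n) j : ℝ) - (cantorDigit a (u n) j : ℝ)) / (q:ℝ) ^ (j + 1) = 0 := by
      apply Finset.sum_eq_zero
      intro j hj
      rw [Stmt7Aux.digit_eq_of_floor_eq ha (hfloor n) (Finset.mem_range.mp hj)]
      simp
    rw [hzero, sub_zero, abs_le] at htail
    rw [hfv n, hfu n]
    exact htail.2
  have hupper : ∀ n, (cantorF a q (v n) - cantorF a q (u n)) / (v n - u n)
      ≤ 2 * ((cantorProd a n : ℝ) / (q:ℝ)^n) := by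
    intro n
    have hpos : 0 < v n - u n := by linarith [huv n]
    rw [div_le_iff₀ hpos]
    have hc : (2 * ((cantorProd a n : ℝ) / (q:ℝ)^n)) * (1/(2*(cantorProd a n : ℝ)))
        = (1/(q:ℝ))^n := by
      have h1 : (cantorProd a n : ℝ) ≠ 0 := ne_of_gt (hP n)
      have h2 : (q:ℝ) ≠ 0 := ne_of_gt hq0
      rw [div_pow, one_pow]
      field_simp
    have hcnonneg : 0 ≤ 2 * ((cantorProd a n : ℝ) / (q:ℝ)^n) := by positivity
    calc cantorF a q (v n) - cantorF a q (u n) ≤ (1/(q:ℝ))^n := hfdiff n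
      _ = (2 * ((cantorProd a n : ℝ) / (q:ℝ)^n)) * (1/(2*(cantorProd a n : ℝ))) := hc.symm
      _ ≤ (2 * ((cantorProd a n : ℝ) / (q:ℝ)^n)) * (v n - u n) :=
          mul_le_mul_of_nonneg_left (hvsublow n) hcnonneg
  have hlower : ∀ n, 0 ≤ (cantorF a q (v n) - cantorF a q (u n)) / (v n - u n) := by
    intro n
    apply div_nonneg _ (by linarith [huv n])
    rw [sub_nonneg]
    apply hmono ⟨hu0 n, le_trans (hux n) hxIcc.2⟩
      ⟨le_trans (hu0 n) (huv n).le, (hv1 n).le⟩ (huv n).le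
  have hzero : Tendsto (fun n => (cantorF a q (v n) - cantorF a q (u n)) / (v n - u n))
      atTop (𝓝 0) := by
    apply squeeze_zero hlower hupper
    have := (Stmt7Aux.ratio_tendsto hq ha hinf).const_mul (2:ℝ)
    simpa using this
  exact tendsto_nhds_unique hslope hzero
end

section
/- The maps h and Φ are injective on Θ^{ℕ≥1}; consequently there is a unique well-defined bijection g : D → E satisfying g(h(α)) = Φ(α) for every α ∈ Θ^{ℕ≥1}. -/
open Filter Topology MeasureTheory

/-- `α` is a sequence with all terms in `Θ = {1,…,q-1} \ {u}`. -/
def ThetaSeq (q u : ℕ) (α : ℕ → ℕ) : Prop :=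
  ∀ n, 1 ≤ α n ∧ α n ≤ q - 1 ∧ α n ≠ u

/-- `S_{n+1}(α) = α_1 + ⋯ + α_{n+1}` (0-indexed: `α i` is the paper's `α_{i+1}`). -/
def Ssum (α : ℕ → ℕ) (n : ℕ) : ℕ := ∑ i ∈ Finset.range (n + 1), α i

/-- `h(α) = u/(q-1) + ∑_{n≥1} (α_n - u) q^{-S_n(α)}`. -/
noncomputable def hmap (q u : ℕ) (α : ℕ → ℕ) : ℝ :=
  (u : ℝ) / ((q : ℝ) - 1) +
    ∑' n : ℕ, ((α n : ℝ) - (u : ℝ)) / (q : ℝ) ^ (Ssum α n)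

/-- `Φ(α) = ∑_{n≥1} α_n q^{-n}`. -/
noncomputable def Phi (q : ℕ) (α : ℕ → ℕ) : ℝ :=
  ∑' n : ℕ, (α n : ℝ) / (q : ℝ) ^ (n + 1)

/-- `D = {h(α) : α ∈ Θ^{ℕ≥1}}`. -/
def Dset (q u : ℕ) : Set ℝ := {x | ∃ α, ThetaSeq q u α ∧ hmap q u α = x}

/-- `E = {Φ(α) : α ∈ Θ^{ℕ≥1}}`. -/
def Eset (q u : ℕ) : Set ℝ := {y | ∃ α, ThetaSeq q u α ∧ Phi q α = y}

/-! ### Auxiliary material -/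

section Aux

variable {q u : ℕ} {α β : ℕ → ℕ}

lemma Ssum_succ (α : ℕ → ℕ) (n : ℕ) : Ssum α (n + 1) = Ssum α n + α (n + 1) := by
  simp [Ssum, Finset.sum_range_succ]

lemma Ssum_strictMono (h : ∀ n, 1 ≤ α n) : StrictMono (Ssum α) := by
  apply strictMono_nat_of_lt_succ
  intro n
  have := h (n + 1)
  rw [Ssum_succ]
  omega

lemma Ssum_ge (h : ∀ n, 1 ≤ α n) (n : ℕ) : n + 1 ≤ Ssum α n := by
  induction n with
  | zero => simpa [Ssum] using h 0
  | succ n ih =>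
    have := h (n + 1)
    rw [Ssum_succ]
    omega

open Classical in
/-- digit sequence of `h(α)` in base `q`. -/
noncomputable def dig (u : ℕ) (α : ℕ → ℕ) (j : ℕ) : ℕ :=
  if h : ∃ n, Ssum α n = j + 1 then α h.choose else u

lemma dig_Ssum (h : ∀ n, 1 ≤ α n) (n : ℕ) : dig u α (Ssum α n - 1) = α n := by
  have h1 : 1 ≤ Ssum α n := le_trans (by omega) (Ssum_ge h n)
  have hex : ∃ m, Ssum α m = (Ssum α n - 1) + 1 := ⟨n, by omega⟩
  have hspec := hex.choose_spec
  have hc : hex.choose = n := (Ssum_strictMono h).injective (by omega)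
  unfold dig
  rw [dif_pos hex, hc]

lemma dig_of_not {j : ℕ} (hne : ¬ ∃ n, Ssum α n = j + 1) : dig u α j = u := by
  unfold dig
  rw [dif_neg hne]

lemma dig_le (hu : u ≤ q - 1) (hb : ∀ n, α n ≤ q - 1) (j : ℕ) : dig u α j ≤ q - 1 := by
  unfold dig
  split
  · exact hb _
  · exact hu

lemma cast_le_qsub1 {m : ℕ} (hq : 2 ≤ q) (hm : m ≤ q - 1) : (m : ℝ) ≤ (q : ℝ) - 1 := by
  have : (m : ℝ) ≤ ((q - 1 : ℕ) : ℝ) := by exact_mod_cast hm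
  rwa [Nat.cast_sub (by omega), Nat.cast_one] at this

lemma summable_digits (hq : 2 ≤ q) {d : ℕ → ℕ} (hd : ∀ j, d j ≤ q - 1) :
    Summable (fun j : ℕ => (d j : ℝ) / (q : ℝ) ^ (j + 1)) := by
  have hq0 : (0 : ℝ) < q := by positivity
  have h1 : (0 : ℝ) ≤ 1 / q := by positivity
  have h2 : (1 : ℝ) / q < 1 := by
    rw [div_lt_one hq0]; exact_mod_cast by omega
  have hgeom : Summable (fun j : ℕ => ((q : ℝ) - 1) / q * (1 / q) ^ j) :=
    (summable_geometric_of_lt_one h1 h2).mul_left _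
  apply Summable.of_nonneg_of_le (fun j => by positivity) _ hgeom
  intro j
  have hb : (d j : ℝ) ≤ (q : ℝ) - 1 := cast_le_qsub1 hq (hd j)
  have heq1 : ((q : ℝ) - 1) / q * (1 / q) ^ j = ((q : ℝ) - 1) / q ^ (j + 1) := by
    rw [div_pow, one_pow, div_mul_div_comm, mul_one, ← pow_succ']
  rw [heq1]
  gcongr

/-- Key uniqueness lemma for base-`q` expansions whose digit sequences have
infinitely many nonzero digits. -/
lemma exp_aux (hq : 2 ≤ q) {d e : ℕ → ℕ} (hd : ∀ j, d j ≤ q - 1) (he : ∀ j, e j ≤ q - 1)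
    (he0 : ∀ N, ∃ j, N ≤ j ∧ e j ≠ 0)
    (heq : ∑' j : ℕ, (d j : ℝ) / (q : ℝ) ^ (j + 1) = ∑' j : ℕ, (e j : ℝ) / (q : ℝ) ^ (j + 1))
    (n : ℕ) (hfirst : ∀ i, i < n → d i = e i) (hlt : d n < e n) : False := by
  have hq0 : (0 : ℝ) < q := by positivity
  have hq1 : (1 : ℝ) < q := by exact_mod_cast by omega
  set f : ℕ → ℝ := fun j => (d j : ℝ) / (q : ℝ) ^ (j + 1) with hf
  set g : ℕ → ℝ := fun j => (e j : ℝ) / (q : ℝ) ^ (j + 1) with hg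
  have hSd : Summable f := summable_digits hq hd
  have hSe : Summable g := summable_digits hq he
  have hsplitd := Summable.sum_add_tsum_nat_add (f := f) (n + 1) hSd
  have hsplite := Summable.sum_add_tsum_nat_add (f := g) (n + 1) hSe
  set Td := ∑' i : ℕ, f (i + (n + 1)) with hTd
  set Te := ∑' i : ℕ, g (i + (n + 1)) with hTe
  have hhead : ∑ i ∈ Finset.range n, f i = ∑ i ∈ Finset.range n, g i := by
    apply Finset.sum_congr rfl
    intro i hi
    simp only [hf, hg]
    rw [hfirst i (Finset.mem_range.mp hi)]
  have hdsum : ∑ i ∈ Finset.range (n + 1), f i = ∑ i ∈ Finset.range n, g i + f n := by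
    rw [Finset.sum_range_succ, hhead]
  have hesum : ∑ i ∈ Finset.range (n + 1), g i = ∑ i ∈ Finset.range n, g i + g n := by
    rw [Finset.sum_range_succ]
  have hkey : f n + Td = g n + Te := by
    have := heq
    rw [← hsplitd, ← hsplite, hdsum, hesum] at this
    linarith
  -- lower bound for g n - f n
  have hgap : (1 : ℝ) / q ^ (n + 1) ≤ g n - f n := by
    have : (d n : ℝ) + 1 ≤ (e n : ℝ) := by exact_mod_cast hlt
    have hpow : (0 : ℝ) < (q : ℝ) ^ (n + 1) := by positivity
    simp only [hf, hg]
    rw [div_sub_div_same, le_div_iff₀ hpow, one_div, inv_mul_cancel₀ hpow.ne']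
    linarith
  -- upper bound for Td
  have hTdle : Td ≤ 1 / q ^ (n + 1) := by
    have h1 : (0 : ℝ) ≤ 1 / q := by positivity
    have h2 : (1 : ℝ) / q < 1 := by
      rw [div_lt_one hq0]; exact hq1
    have hbound : ∀ i : ℕ, f (i + (n + 1)) ≤ ((q : ℝ) - 1) / q ^ (n + 2) * (1 / q) ^ i := by
      intro i
      have hb : (d (i + (n + 1)) : ℝ) ≤ (q : ℝ) - 1 := cast_le_qsub1 hq (hd _)
      have hrw : ((q : ℝ) - 1) / q ^ (n + 2) * (1 / q) ^ i
          = ((q : ℝ) - 1) / q ^ ((i + (n + 1)) + 1) := by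
        rw [div_pow, one_pow, div_mul_div_comm, mul_one, ← pow_add]
        have hexp : n + 2 + i = (i + (n + 1)) + 1 := by omega
        rw [hexp]
      rw [hrw]
      simp only [hf]
      gcongr
    have hgsum : Summable (fun i : ℕ => ((q : ℝ) - 1) / q ^ (n + 2) * (1 / q) ^ i) :=
      (summable_geometric_of_lt_one h1 h2).mul_left _
    have := Summable.tsum_le_tsum hbound (hSd.comp_injective (add_left_injective (n + 1))) hgsum
    rw [tsum_mul_left, tsum_geometric_of_lt_one h1 h2] at this
    refine this.trans_eq ?_
    have hne : (q : ℝ) - 1 ≠ 0 := by linarith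
    have hqne : (q : ℝ) ≠ 0 := hq0.ne'
    rw [one_sub_div hqne]
    field_simp
    ring
  have hTe0 : (0 : ℝ) < Te := by
    obtain ⟨j, hjN, hj0⟩ := he0 (n + 1)
    have hji : j - (n + 1) + (n + 1) = j := by omega
    have hterm : (0 : ℝ) < g (j - (n + 1) + (n + 1)) := by
      rw [hji]
      simp only [hg]
      have hej : (0 : ℝ) < (e j : ℝ) := by exact_mod_cast Nat.pos_of_ne_zero hj0
      exact div_pos hej (by positivity)
    have hle := Summable.le_tsum (hSe.comp_injective (add_left_injective (n + 1))) (j - (n + 1))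
      (fun k _ => by simp only [Function.comp, hg]; positivity)
    exact hterm.trans_le hle
  linarith

lemma expansion_inj (hq : 2 ≤ q) {d e : ℕ → ℕ} (hd : ∀ j, d j ≤ q - 1) (he : ∀ j, e j ≤ q - 1)
    (hd0 : ∀ N, ∃ j, N ≤ j ∧ d j ≠ 0) (he0 : ∀ N, ∃ j, N ≤ j ∧ e j ≠ 0)
    (heq : ∑' j : ℕ, (d j : ℝ) / (q : ℝ) ^ (j + 1) = ∑' j : ℕ, (e j : ℝ) / (q : ℝ) ^ (j + 1)) :
    d = e := by
  by_contra hne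
  have hex : ∃ n, d n ≠ e n := Function.ne_iff.mp hne
  classical
  set n := Nat.find hex with hn
  have hdn : d n ≠ e n := Nat.find_spec hex
  have hfirst : ∀ i, i < n → d i = e i := fun i hi => by
    by_contra h; exact (Nat.find_min hex hi) h
  rcases lt_or_gt_of_ne hdn with h | h
  · exact exp_aux hq hd he he0 heq n hfirst h
  · exact exp_aux hq he hd hd0 heq.symm n (fun i hi => (hfirst i hi).symm) h

/-- `h(α)` equals the base-`q` expansion with digit sequence `dig u α`. -/
lemma hmap_eq_tsum_dig (hq : 2 ≤ q) (hu : u ≤ q - 1) (hα : ∀ n, 1 ≤ α n ∧ α n ≤ q - 1) :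
    hmap q u α = ∑' j : ℕ, (dig u α j : ℝ) / (q : ℝ) ^ (j + 1) := by
  classical
  have hpos : ∀ n, 1 ≤ α n := fun n => (hα n).1
  have hq0 : (0 : ℝ) < q := by positivity
  have hq1 : (1 : ℝ) < q := by exact_mod_cast by omega
  have h1 : (0 : ℝ) ≤ 1 / q := by positivity
  have h2 : (1 : ℝ) / q < 1 := by rw [div_lt_one hq0]; exact hq1
  have hdigle : ∀ j, dig u α j ≤ q - 1 :=
    dig_le hu (fun n => (hα n).2)
  have hSu : Summable (fun j : ℕ => (u : ℝ) / (q : ℝ) ^ (j + 1)) :=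
    summable_digits hq (fun _ => hu)
  have hSdig : Summable (fun j : ℕ => (dig u α j : ℝ) / (q : ℝ) ^ (j + 1)) :=
    summable_digits hq hdigle
  have hSdiff : Summable (fun j : ℕ => ((dig u α j : ℝ) - u) / (q : ℝ) ^ (j + 1)) := by
    have := hSdig.sub hSu
    convert this using 2 with j
    · rfl
    · ring
  -- split the tsum
  have hsplit : ∑' j : ℕ, (dig u α j : ℝ) / (q : ℝ) ^ (j + 1)
      = (∑' j : ℕ, (u : ℝ) / (q : ℝ) ^ (j + 1))
        + ∑' j : ℕ, ((dig u α j : ℝ) - u) / (q : ℝ) ^ (j + 1) := by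
    rw [← Summable.tsum_add hSu hSdiff]
    congr 1 with j
    ring
  -- geometric part
  have hgeo : ∑' j : ℕ, (u : ℝ) / (q : ℝ) ^ (j + 1) = (u : ℝ) / ((q : ℝ) - 1) := by
    have hterm : ∀ j : ℕ, (u : ℝ) / (q : ℝ) ^ (j + 1) = (u : ℝ) / q * (1 / q) ^ j := by
      intro j
      rw [div_pow, one_pow, div_mul_div_comm, mul_one, pow_succ]
      ring_nf
    rw [tsum_congr hterm, tsum_mul_left, tsum_geometric_of_lt_one h1 h2]
    have hqne : (q : ℝ) ≠ 0 := hq0.ne'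
    have hne : (q : ℝ) - 1 ≠ 0 := by linarith
    rw [one_sub_div hqne]
    field_simp
  -- diff part via injection n ↦ Ssum α n - 1
  have hdiff : ∑' j : ℕ, ((dig u α j : ℝ) - u) / (q : ℝ) ^ (j + 1)
      = ∑' n : ℕ, ((α n : ℝ) - u) / (q : ℝ) ^ (Ssum α n) := by
    symm
    have hginj : Function.Injective (fun n => Ssum α n - 1) := by
      intro a b hab
      have ha := Ssum_ge hpos a
      have hb := Ssum_ge hpos b
      exact (Ssum_strictMono hpos).injective (by simp only at hab; omega)
    have hsupp : Function.support (fun j => ((dig u α j : ℝ) - u) / (q : ℝ) ^ (j + 1))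
        ⊆ Set.range (fun n => Ssum α n - 1) := by
      intro j hj
      simp only [Function.mem_support] at hj
      by_contra hjr
      apply hj
      have hjd : dig u α j = u := by
        apply dig_of_not
        rintro ⟨m, hm⟩
        exact hjr (Set.mem_range.mpr ⟨m, by omega⟩)
      rw [hjd, sub_self, zero_div]
    have htr := hginj.tsum_eq
      (f := fun j => ((dig u α j : ℝ) - u) / (q : ℝ) ^ (j + 1)) hsupp
    rw [← htr]
    apply tsum_congr
    intro n
    have h1n : 1 ≤ Ssum α n := le_trans (by omega) (Ssum_ge hpos n)
    rw [dig_Ssum hpos n]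
    congr 2
    omega
  rw [hsplit, hgeo, hdiff, hmap]

/-- digits of `dig u α` are nonzero infinitely often. -/
lemma dig_inf_nonzero (hpos : ∀ n, 1 ≤ α n) (N : ℕ) :
    ∃ j, N ≤ j ∧ dig u α j ≠ 0 := by
  refine ⟨Ssum α N - 1, ?_, ?_⟩
  · have := Ssum_ge hpos N; omega
  · rw [dig_Ssum hpos N]
    have := hpos N; omega

/-- `α` is recoverable from `dig u α`. -/
lemma dig_injective (hα : ThetaSeq q u α) (hβ : ThetaSeq q u β)
    (hd : dig u α = dig u β) : α = β := by
  have hpα : ∀ n, 1 ≤ α n := fun n => (hα n).1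
  have hpβ : ∀ n, 1 ≤ β n := fun n => (hβ n).1
  have key : ∀ (γ δ : ℕ → ℕ), ThetaSeq q u γ → ThetaSeq q u δ → dig u γ = dig u δ →
      ∀ n, (∀ i, i < n → γ i = δ i) → ¬ (γ n < δ n) := by
    intro γ δ hγ hδ hdig n hi hlt
    have hpγ : ∀ n, 1 ≤ γ n := fun n => (hγ n).1
    have hpδ : ∀ n, 1 ≤ δ n := fun n => (hδ n).1
    set j := Ssum γ n - 1 with hj
    have h1 : 1 ≤ Ssum γ n := le_trans (by omega) (Ssum_ge hpγ n)
    have hdγ : dig u γ j = γ n := dig_Ssum hpγ n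
    have hheads : ∑ i ∈ Finset.range n, γ i = ∑ i ∈ Finset.range n, δ i :=
      Finset.sum_congr rfl (fun i hii => hi i (Finset.mem_range.mp hii))
    have hSn : Ssum γ n = ∑ i ∈ Finset.range n, δ i + γ n := by
      rw [Ssum, Finset.sum_range_succ, hheads]
    have hdδ : dig u δ j = u := by
      apply dig_of_not
      rintro ⟨m, hm⟩
      have hjm : Ssum δ m = Ssum γ n := by omega
      rcases lt_or_ge m n with hmn | hmn
      · have : Ssum δ m = Ssum γ m := by
          apply Finset.sum_congr rfl
          intro i hii
          have : i < n := by
            have := Finset.mem_range.mp hii; omega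
          exact (hi i this).symm
        have hlt' := Ssum_strictMono hpγ hmn
        omega
      · have h1' : Ssum δ n ≤ Ssum δ m := (Ssum_strictMono hpδ).monotone hmn
        have h2' : Ssum δ n = ∑ i ∈ Finset.range n, δ i + δ n := by
          rw [Ssum, Finset.sum_range_succ]
        omega
    have : γ n = u := by rw [← hdγ, hdig, hdδ]
    exact (hγ n).2.2 this
  funext n
  induction n using Nat.strong_induction_on with
  | _ n ih =>
    by_contra hne
    rcases lt_or_gt_of_ne hne with h | h
    · exact key α β hα hβ hd n (fun i hi => ih i hi) h
    · exact key β α hβ hα hd.symm n (fun i hi => (ih i hi).symm) h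

end Aux

/-- `h` and `Φ` are injective on `Θ^{ℕ≥1}`; consequently there is a
unique bijection `g : D → E` with `g(h(α)) = Φ(α)` for all `α ∈ Θ^{ℕ≥1}`. -/
theorem stmt9 (q : ℕ) (hq : 4 ≤ q) (u : ℕ) (hu : u ≤ q - 1) :
    (∀ α β, ThetaSeq q u α → ThetaSeq q u β → hmap q u α = hmap q u β → α = β) ∧
    (∀ α β, ThetaSeq q u α → ThetaSeq q u β → Phi q α = Phi q β → α = β) ∧
    (∃! g : Dset q u → Eset q u, Function.Bijective g ∧
      ∀ α (hα : ThetaSeq q u α),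
        ((g ⟨hmap q u α, α, hα, rfl⟩ : Eset q u) : ℝ) = Phi q α) := by
  have hq2 : 2 ≤ q := by omega
  -- h injectivity
  have hinj : ∀ α β, ThetaSeq q u α → ThetaSeq q u β → hmap q u α = hmap q u β → α = β := by
    intro α β hα hβ heq
    have hdigle : ∀ (γ : ℕ → ℕ), ThetaSeq q u γ → ∀ j, dig u γ j ≤ q - 1 :=
      fun γ hγ => dig_le hu (fun n => (hγ n).2.1)
    have h1 := hmap_eq_tsum_dig hq2 hu (fun n => ⟨(hα n).1, (hα n).2.1⟩)
    have h2 := hmap_eq_tsum_dig hq2 hu (fun n => ⟨(hβ n).1, (hβ n).2.1⟩)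
    have heq' : ∑' j : ℕ, (dig u α j : ℝ) / (q : ℝ) ^ (j + 1)
        = ∑' j : ℕ, (dig u β j : ℝ) / (q : ℝ) ^ (j + 1) := by
      rw [← h1, ← h2, heq]
    have hd := expansion_inj hq2 (hdigle α hα) (hdigle β hβ)
      (dig_inf_nonzero (fun n => (hα n).1)) (dig_inf_nonzero (fun n => (hβ n).1)) heq'
    exact dig_injective hα hβ hd
  -- Φ injectivity
  have pinj : ∀ α β, ThetaSeq q u α → ThetaSeq q u β → Phi q α = Phi q β → α = β := by
    intro α β hα hβ heq
    exact expansion_inj hq2 (fun j => (hα j).2.1) (fun j => (hβ j).2.1)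
      (fun N => ⟨N, le_refl N, by have := (hα N).1; omega⟩)
      (fun N => ⟨N, le_refl N, by have := (hβ N).1; omega⟩) heq
  refine ⟨hinj, pinj, ?_⟩
  classical
  -- define g by choice
  have hval : ∀ x : Dset q u, ThetaSeq q u x.2.choose ∧ hmap q u x.2.choose = (x : ℝ) :=
    fun x => x.2.choose_spec
  let g : Dset q u → Eset q u :=
    fun x => ⟨Phi q x.2.choose, x.2.choose, (hval x).1, rfl⟩
  have hkey : ∀ α (hα : ThetaSeq q u α),
      ((g ⟨hmap q u α, α, hα, rfl⟩ : Eset q u) : ℝ) = Phi q α := by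
    intro α hα
    set x : Dset q u := ⟨hmap q u α, α, hα, rfl⟩ with hx
    have hspec := hval x
    have : x.2.choose = α := hinj _ _ hspec.1 hα hspec.2
    show Phi q x.2.choose = Phi q α
    rw [this]
  have hbij : Function.Bijective g := by
    constructor
    · intro x y hxy
      have hx := hval x
      have hy := hval y
      have hPhi : Phi q x.2.choose = Phi q y.2.choose := congrArg (Subtype.val) hxy
      have := pinj _ _ hx.1 hy.1 hPhi
      apply Subtype.ext
      rw [← hx.2, ← hy.2, this]
    · intro y
      obtain ⟨β, hβ, hβy⟩ := y.2
      refine ⟨⟨hmap q u β, β, hβ, rfl⟩, ?_⟩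
      apply Subtype.ext
      rw [hkey β hβ, hβy]
  refine ⟨g, ⟨hbij, hkey⟩, ?_⟩
  rintro g' ⟨hbij', hkey'⟩
  funext x
  apply Subtype.ext
  have hx := hval x
  have hxeq : x = ⟨hmap q u x.2.choose, x.2.choose, hx.1, rfl⟩ := Subtype.ext hx.2.symm
  calc (g' x : ℝ) = (g' ⟨hmap q u x.2.choose, x.2.choose, hx.1, rfl⟩ : ℝ) := by rw [← hxeq]
    _ = Phi q x.2.choose := hkey' _ hx.1
    _ = (g ⟨hmap q u x.2.choose, x.2.choose, hx.1, rfl⟩ : ℝ) := (hkey _ hx.1).symm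
    _ = (g x : ℝ) := by rw [← hxeq]
end

section
/- The set D is nowhere dense in ℝ and has Lebesgue measure zero. -/
open Filter Topology MeasureTheory

namespace Stmt10Aux

/-- Partial approximation to `hmap`. -/
noncomputable def Papprox (q u : ℕ) (α : ℕ → ℕ) (k : ℕ) : ℝ :=
  (u : ℝ) / ((q : ℝ) - 1) +
    ∑ n ∈ Finset.range (k + 1), ((α n : ℝ) - (u : ℝ)) / (q : ℝ) ^ (Ssum α n)

/-- Extension of a finite word by 1's. -/
def ext (k : ℕ) (w : Fin (k + 1) → ℕ) : ℕ → ℕ :=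
  fun n => if h : n < k + 1 then w ⟨n, h⟩ else 1

lemma ssum_ge (α : ℕ → ℕ) (h1 : ∀ n, 1 ≤ α n) (n : ℕ) : n + 1 ≤ Ssum α n := by
  have := Finset.card_nsmul_le_sum (Finset.range (n + 1)) α 1 (fun i _ => h1 i)
  simpa [Ssum] using this

lemma ssum_shift (α : ℕ → ℕ) (h1 : ∀ n, 1 ≤ α n) (k n : ℕ) :
    Ssum α k + (n + 1) ≤ Ssum α (n + (k + 1)) := by
  have hsplit : ∑ i ∈ Finset.Ico 0 (k + 1), α i + ∑ i ∈ Finset.Ico (k + 1) (n + (k + 1) + 1), α i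
      = ∑ i ∈ Finset.Ico 0 (n + (k + 1) + 1), α i :=
    Finset.sum_Ico_consecutive α (by omega) (by omega)
  have h2 : (n + 1) ≤ ∑ i ∈ Finset.Ico (k + 1) (n + (k + 1) + 1), α i := by
    calc (n + 1) = (Finset.Ico (k + 1) (n + (k + 1) + 1)).card • 1 := by
          simp [Nat.card_Ico]; omega
      _ ≤ _ := Finset.card_nsmul_le_sum _ _ _ (fun i _ => h1 i)
  have e1 : Ssum α k = ∑ i ∈ Finset.Ico 0 (k + 1), α i := by
    rw [Ssum, Finset.range_eq_Ico]
  have e2 : Ssum α (n + (k + 1)) = ∑ i ∈ Finset.Ico 0 (n + (k + 1) + 1), α i := by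
    rw [Ssum, Finset.range_eq_Ico]
  omega

section

variable {q u : ℕ} (hq : 4 ≤ q) (hu : u ≤ q - 1) {α : ℕ → ℕ} (hα : ThetaSeq q u α)

include hq hu hα

lemma term_abs_le (n : ℕ) :
    |((α n : ℝ) - (u : ℝ)) / (q : ℝ) ^ (Ssum α n)| ≤ ((q : ℝ) - 1) * ((1 : ℝ) / q) ^ (Ssum α n) := by
  have hq1 : (1 : ℝ) < (q : ℝ) := by exact_mod_cast (by omega : 1 < q)
  have hαn : (α n : ℝ) ≤ (q : ℝ) - 1 := by
    have := (hα n).2.1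
    have : (α n : ℝ) ≤ ((q - 1 : ℕ) : ℝ) := by exact_mod_cast this
    have hc : ((q - 1 : ℕ) : ℝ) = (q : ℝ) - 1 := by
      have : (1 : ℕ) ≤ q := by omega
      push_cast [Nat.cast_sub this]; ring
    linarith [hc ▸ this]
  have huq : (u : ℝ) ≤ (q : ℝ) - 1 := by
    have : (u : ℝ) ≤ ((q - 1 : ℕ) : ℝ) := by exact_mod_cast hu
    have hc : ((q - 1 : ℕ) : ℝ) = (q : ℝ) - 1 := by
      have h1 : (1 : ℕ) ≤ q := by omega
      push_cast [Nat.cast_sub h1]; ring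
    linarith [hc ▸ this]
  have hpow : (0 : ℝ) < (q : ℝ) ^ (Ssum α n) := by positivity
  rw [abs_div, abs_of_pos hpow, div_le_iff₀ hpow]
  have habs : |(α n : ℝ) - (u : ℝ)| ≤ (q : ℝ) - 1 := by
    rw [abs_sub_le_iff]
    constructor <;> [skip; skip] <;>
      · have h0 : (0 : ℝ) ≤ (α n : ℝ) := by positivity
        have h0' : (0 : ℝ) ≤ (u : ℝ) := by positivity
        linarith
  calc |(α n : ℝ) - (u : ℝ)| ≤ (q : ℝ) - 1 := habs
    _ = ((q : ℝ) - 1) * ((1 / q) ^ (Ssum α n) * (q : ℝ) ^ (Ssum α n)) := by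
        rw [one_div, inv_pow, inv_mul_cancel₀ (by positivity)]; ring
    _ = ((q : ℝ) - 1) * (1 / q) ^ (Ssum α n) * (q : ℝ) ^ (Ssum α n) := by ring

lemma term_abs_le' (n : ℕ) :
    |((α n : ℝ) - (u : ℝ)) / (q : ℝ) ^ (Ssum α n)| ≤ ((q : ℝ) - 1) * ((1 : ℝ) / q) ^ (n + 1) := by
  have hq1 : (1 : ℝ) < (q : ℝ) := by exact_mod_cast (by omega : 1 < q)
  refine le_trans (term_abs_le hq hu hα n) ?_
  have hle : (n + 1 : ℕ) ≤ Ssum α n := ssum_ge α (fun m => (hα m).1) n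
  have : ((1 : ℝ) / q) ^ (Ssum α n) ≤ ((1 : ℝ) / q) ^ (n + 1) :=
    pow_le_pow_of_le_one (by positivity) (by rw [div_le_one] <;> linarith) hle
  nlinarith [this]

lemma summable_term :
    Summable (fun n : ℕ => ((α n : ℝ) - (u : ℝ)) / (q : ℝ) ^ (Ssum α n)) := by
  have hq1 : (1 : ℝ) < (q : ℝ) := by exact_mod_cast (by omega : 1 < q)
  have hr0 : (0 : ℝ) ≤ 1 / q := by positivity
  have hr1 : (1 : ℝ) / q < 1 := by rw [div_lt_one] <;> linarith
  have hg : Summable (fun n : ℕ => ((q : ℝ) - 1) * ((1 : ℝ) / q) ^ (n + 1)) := by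
    have := ((summable_geometric_of_lt_one hr0 hr1).mul_left (((q : ℝ) - 1) * (1 / q)))
    refine this.congr fun n => ?_
    ring
  exact Summable.of_norm_bounded hg (fun n => term_abs_le' hq hu hα n)

lemma tail_bound (k : ℕ) :
    |∑' n : ℕ, ((α (n + (k + 1)) : ℝ) - (u : ℝ)) / (q : ℝ) ^ (Ssum α (n + (k + 1)))| ≤
      ((1 : ℝ) / q) ^ (k + 1) := by
  have hq1 : (1 : ℝ) < (q : ℝ) := by exact_mod_cast (by omega : 1 < q)
  have hr0 : (0 : ℝ) ≤ 1 / q := by positivity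
  have hr1 : (1 : ℝ) / q < 1 := by rw [div_lt_one] <;> linarith
  set S := Ssum α k with hS
  set f : ℕ → ℝ := fun n => ((α n : ℝ) - (u : ℝ)) / (q : ℝ) ^ (Ssum α n) with hf
  set g : ℕ → ℝ := fun n : ℕ => ((q : ℝ) - 1) * ((1 : ℝ) / q) ^ (S + n + 1) with hg
  have hgsum : Summable g := by
    have := ((summable_geometric_of_lt_one hr0 hr1).mul_left
      (((q : ℝ) - 1) * ((1 : ℝ) / q) ^ (S + 1)))
    refine this.congr fun n => ?_
    simp only [hg]
    rw [show S + n + 1 = (S + 1) + n by ring, pow_add]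
    ring
  have hfsum : Summable fun n : ℕ => f (n + (k + 1)) :=
    (summable_term hq hu hα).comp_injective (add_left_injective (k + 1))
  have hnormsum : Summable fun n : ℕ => ‖f (n + (k + 1))‖ := hfsum.abs
  have hbound : ∀ n : ℕ, ‖f (n + (k + 1))‖ ≤ g n := by
    intro n
    have h1 := term_abs_le hq hu hα (n + (k + 1))
    have h2 : S + (n + 1) ≤ Ssum α (n + (k + 1)) := ssum_shift α (fun m => (hα m).1) k n
    have h3 : ((1 : ℝ) / q) ^ (Ssum α (n + (k + 1))) ≤ ((1 : ℝ) / q) ^ (S + n + 1) :=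
      pow_le_pow_of_le_one hr0 (le_of_lt hr1) (by omega)
    simp only [Real.norm_eq_abs, hf, hg]
    nlinarith [h1, h3]
  have h4 : ‖∑' n : ℕ, f (n + (k + 1))‖ ≤ ∑' n : ℕ, ‖f (n + (k + 1))‖ :=
    norm_tsum_le_tsum_norm hnormsum
  have h5 : ∑' n : ℕ, ‖f (n + (k + 1))‖ ≤ ∑' n : ℕ, g n :=
    Summable.tsum_le_tsum hbound hnormsum hgsum
  have h6 : ∑' n : ℕ, g n = ((1 : ℝ) / q) ^ S := by
    have : ∑' n : ℕ, g n =
        (((q : ℝ) - 1) * ((1 : ℝ) / q) ^ (S + 1)) * ∑' n : ℕ, ((1 : ℝ) / q) ^ n := by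
      rw [← tsum_mul_left]
      congr 1 with n
      simp only [hg]
      rw [show S + n + 1 = (S + 1) + n by ring, pow_add]
      ring
    rw [this, tsum_geometric_of_lt_one hr0 hr1]
    have hq0 : (q : ℝ) ≠ 0 := by positivity
    have hq1' : (q : ℝ) - 1 ≠ 0 := by intro h; nlinarith
    rw [pow_succ]
    field_simp
  have h7 : ((1 : ℝ) / q) ^ S ≤ ((1 : ℝ) / q) ^ (k + 1) := by
    exact pow_le_pow_of_le_one hr0 (le_of_lt hr1) (ssum_ge α (fun m => (hα m).1) k)
  calc |∑' n : ℕ, f (n + (k + 1))| ≤ ∑' n : ℕ, ‖f (n + (k + 1))‖ := h4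
    _ ≤ ∑' n : ℕ, g n := h5
    _ = ((1 : ℝ) / q) ^ S := h6
    _ ≤ ((1 : ℝ) / q) ^ (k + 1) := h7

lemma hmap_mem_Icc (k : ℕ) :
    hmap q u α ∈ Set.Icc (Papprox q u α k - ((1 : ℝ) / q) ^ (k + 1))
      (Papprox q u α k + ((1 : ℝ) / q) ^ (k + 1)) := by
  set f : ℕ → ℝ := fun n => ((α n : ℝ) - (u : ℝ)) / (q : ℝ) ^ (Ssum α n) with hf
  have hsplit : ∑ i ∈ Finset.range (k + 1), f i + ∑' n : ℕ, f (n + (k + 1)) = ∑' n : ℕ, f n :=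
    Summable.sum_add_tsum_nat_add (k + 1) (summable_term hq hu hα)
  have htail := tail_bound hq hu hα k
  have : hmap q u α - Papprox q u α k = ∑' n : ℕ, f (n + (k + 1)) := by
    simp only [hmap, Papprox, hf]
    rw [← hsplit]
    ring
  rw [Set.mem_Icc]
  rw [abs_le] at htail
  constructor <;> linarith [htail.1, htail.2, this ▸ htail.1]

end

/-- Papprox only depends on the first `k+1` values. -/
lemma Papprox_congr (q u : ℕ) (α β : ℕ → ℕ) (k : ℕ) (h : ∀ i, i < k + 1 → α i = β i) :
    Papprox q u α k = Papprox q u β k := by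
  unfold Papprox
  congr 1
  apply Finset.sum_congr rfl
  intro n hn
  rw [Finset.mem_range] at hn
  have hS : Ssum α n = Ssum β n := by
    apply Finset.sum_congr rfl
    intro i hi
    rw [Finset.mem_range] at hi
    exact h i (by omega)
  rw [h n hn, hS]

end Stmt10Aux

open Stmt10Aux in
/-- `D` is nowhere dense in `ℝ` and has Lebesgue measure zero. -/
theorem stmt10 (q : ℕ) (hq : 4 ≤ q) (u : ℕ) (hu : u ≤ q - 1) :
    IsNowhereDense (Dset q u) ∧ volume (Dset q u) = 0 := by
  have hq1 : (1 : ℝ) < (q : ℝ) := by exact_mod_cast (by omega : 1 < q)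
  have hqm1 : ((q - 1 : ℕ) : ℝ) = (q : ℝ) - 1 := by
    have h1 : (1 : ℕ) ≤ q := by omega
    push_cast [Nat.cast_sub h1]; ring
  -- the cover at level k
  set ε : ℕ → ℝ := fun k => ((1 : ℝ) / q) ^ (k + 1) with hε
  set C : ℕ → Set ℝ := fun k =>
    ⋃ w : Fin (k + 1) → (Finset.Icc 1 (q - 1) : Finset ℕ),
      Set.Icc (Papprox q u (ext k (fun i => (w i : ℕ))) k - ε k)
        (Papprox q u (ext k (fun i => (w i : ℕ))) k + ε k) with hC
  have hDC : ∀ k, Dset q u ⊆ C k := by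
    intro k x hx
    obtain ⟨α, hα, hαx⟩ := hx
    have hwmem : ∀ i : Fin (k + 1), α i ∈ (Finset.Icc 1 (q - 1) : Finset ℕ) := by
      intro i
      rw [Finset.mem_Icc]
      exact ⟨(hα i).1, (hα i).2.1⟩
    set w : Fin (k + 1) → (Finset.Icc 1 (q - 1) : Finset ℕ) := fun i => ⟨α i, hwmem i⟩ with hw
    have hext : ∀ i, i < k + 1 → ext k (fun i => (w i : ℕ)) i = α i := by
      intro i hi
      simp [ext, hi, hw]
    have hPeq : Papprox q u (ext k (fun i => (w i : ℕ))) k = Papprox q u α k :=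
      Papprox_congr q u _ α k hext
    rw [hC]
    refine Set.mem_iUnion.mpr ⟨w, ?_⟩
    rw [hPeq, ← hαx]
    exact hmap_mem_Icc hq hu hα k
  have hCclosed : ∀ k, IsClosed (C k) :=
    fun k => isClosed_iUnion_of_finite (fun w => isClosed_Icc)
  have hclDC : ∀ k, closure (Dset q u) ⊆ C k :=
    fun k => closure_minimal (hDC k) (hCclosed k)
  -- volume bound
  have hvol : ∀ k, volume (closure (Dset q u)) ≤
      ENNReal.ofReal (2 * (((q : ℝ) - 1) / q) ^ (k + 1)) := by
    intro k
    refine le_trans (measure_mono (hclDC k)) ?_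
    refine le_trans (measure_iUnion_fintype_le volume _) ?_
    have hvol1 : ∀ w : Fin (k + 1) → (Finset.Icc 1 (q - 1) : Finset ℕ),
        volume (Set.Icc (Papprox q u (ext k (fun i => (w i : ℕ))) k - ε k)
          (Papprox q u (ext k (fun i => (w i : ℕ))) k + ε k)) = ENNReal.ofReal (2 * ε k) := by
      intro w
      rw [Real.volume_Icc]
      congr 1
      ring
    rw [Finset.sum_congr rfl (fun w _ => hvol1 w), Finset.sum_const]
    have hcard : (Finset.univ : Finset (Fin (k + 1) → (Finset.Icc 1 (q - 1) : Finset ℕ))).card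
        = (q - 1) ^ (k + 1) := by
      rw [Finset.card_univ, Fintype.card_fun]
      congr 1
      · simp [Nat.card_Icc]
      · simp
    rw [hcard, nsmul_eq_mul]
    rw [← ENNReal.ofReal_natCast ((q - 1) ^ (k + 1)), ← ENNReal.ofReal_mul (by positivity)]
    apply ENNReal.ofReal_le_ofReal
    have hεk : ε k = ((1 : ℝ) / q) ^ (k + 1) := rfl
    have hcast : (((q - 1) ^ (k + 1) : ℕ) : ℝ) = ((q : ℝ) - 1) ^ (k + 1) := by
      rw [Nat.cast_pow, hqm1]
    have hsplitpow : (((q : ℝ) - 1) / q) ^ (k + 1)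
        = ((q : ℝ) - 1) ^ (k + 1) * ((1 : ℝ) / q) ^ (k + 1) := by
      rw [← mul_pow]; congr 1; ring
    rw [hcast, hεk, hsplitpow]
    apply le_of_eq
    ring
  -- limit
  have htend : Tendsto (fun k : ℕ => ENNReal.ofReal (2 * (((q : ℝ) - 1) / q) ^ (k + 1)))
      atTop (𝓝 0) := by
    have h0 : (0 : ENNReal) = ENNReal.ofReal 0 := by simp
    rw [h0]
    apply ENNReal.tendsto_ofReal
    have hr0 : (0 : ℝ) ≤ ((q : ℝ) - 1) / q := by
      apply div_nonneg <;> linarith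
    have hr1 : ((q : ℝ) - 1) / q < 1 := by
      rw [div_lt_one (by linarith)]; linarith
    have h1 : Tendsto (fun k : ℕ => (((q : ℝ) - 1) / q) ^ k) atTop (𝓝 0) :=
      tendsto_pow_atTop_nhds_zero_of_lt_one hr0 hr1
    have h2 : Tendsto (fun k : ℕ => (((q : ℝ) - 1) / q) ^ (k + 1)) atTop (𝓝 0) :=
      h1.comp (tendsto_add_atTop_nat 1)
    have := h2.const_mul (2 : ℝ)
    simpa using this
  have hcl0 : volume (closure (Dset q u)) = 0 :=
    le_antisymm (ge_of_tendsto' htend hvol) zero_le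
  constructor
  · -- nowhere dense
    show interior (closure (Dset q u)) = ∅
    by_contra h
    have hne : (interior (closure (Dset q u))).Nonempty := Set.nonempty_iff_ne_empty.mpr h
    have hpos := isOpen_interior.measure_pos volume hne
    have hle : volume (interior (closure (Dset q u))) ≤ volume (closure (Dset q u)) :=
      measure_mono interior_subset
    rw [hcl0] at hle
    exact absurd (le_antisymm hle zero_le) (ne_of_gt hpos)
  · exact le_antisymm (le_trans (measure_mono subset_closure) hcl0.le) zero_le
end
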